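/- arXiv:1403.3764 — 4 statements merged into one kernel-verified Lean document; each statement's English description precedes it below -/
import Mathlib

section
/- (Local existence and uniqueness, Theorem 1, local part.) Let n ≥ 1 and T > 0. Let α_0, α_1, …, α_n : [0,T] → ℝ with α_0(t) = 0 and α_n(t) = t for all t, each α_i continuously differentiable, α_i(0) = 0, and 0 = α_0(t) < α_1(t) < ⋯ < α_{n-1}(t) < α_n(t) = t for all t ∈ (0,T]. Let K_1, …, K_n : [0,T] × [0,T] → ℝ be continuous and have continuous partial derivatives with respect to the first variable t, let f : [0,T] → ℝ be continuously differentiable with f(0) = 0, and suppose K_n(t,t) ≠ 0 for all t ∈ [0,T]. If D(0) < 1, then there exists τ ∈ (0,T] such that there is exactly one continuous function x : [0,τ] → ℝ satisfying Σ_{i=1}^{n} ∫_{α_{i-1}(t)}^{α_i(t)} K_i(t,s) x(s) ds = f(t) for every t ∈ [0,τ]. -/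
open intervalIntegral Set

open MeasureTheory


/-- interval integrability of continuous functions -/
private lemma contII (F : ℝ → ℝ) (hF : Continuous F) (a b : ℝ) :
    IntervalIntegrable F volume a b := hF.intervalIntegrable a b

/-- Continuity of a parametric interval integral with moving endpoints. -/
lemma continuous_moving (F : ℝ → ℝ → ℝ) (hF : Continuous (Function.uncurry F))
    (a b : ℝ → ℝ) (ha : Continuous a) (hb : Continuous b) :
    Continuous fun t => ∫ s in a t..b t, F t s := by
  have h1 : Continuous fun t => ∫ s in (0:ℝ)..b t, F t s :=
    intervalIntegral.continuous_parametric_intervalIntegral_of_continuous hF hb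
  have h2 : Continuous fun t => ∫ s in (0:ℝ)..a t, F t s :=
    intervalIntegral.continuous_parametric_intervalIntegral_of_continuous hF ha
  have : (fun t => ∫ s in a t..b t, F t s)
      = fun t => (∫ s in (0:ℝ)..b t, F t s) - (∫ s in (0:ℝ)..a t, F t s) := by
    funext t
    have hc : Continuous (F t) := by
      have : Continuous fun s => Function.uncurry F (t, s) := hF.comp (Continuous.prodMk_right t)
      simpa [Function.uncurry] using this
    rw [intervalIntegral.integral_interval_sub_left (contII _ hc _ _) (contII _ hc _ _)]
  rw [this]
  exact h1.sub h2

/-- set-integral Fubini on a product of two Ioc's for a continuous function -/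
private lemma set_swap (F : ℝ → ℝ → ℝ) (hF : Continuous (Function.uncurry F))
    (a b c d : ℝ) :
    (∫ v in Ioc a b, ∫ s in Ioc c d, F v s) = ∫ s in Ioc c d, ∫ v in Ioc a b, F v s := by
  apply MeasureTheory.integral_integral_swap
  rw [Measure.prod_restrict]
  have hcomp : IsCompact (Icc a b ×ˢ Icc c d) := isCompact_Icc.prod isCompact_Icc
  have : IntegrableOn (Function.uncurry F) (Icc a b ×ˢ Icc c d)
      ((volume : Measure ℝ).prod volume) := by
    exact hF.continuousOn.integrableOn_compact hcomp
  exact this.mono_set (prod_mono Ioc_subset_Icc_self Ioc_subset_Icc_self)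

/-- rectangle Fubini for interval integrals, oriented core case -/
private lemma swap_rect_core (F : ℝ → ℝ → ℝ) (hF : Continuous (Function.uncurry F))
    {a b c d : ℝ} (hab : a ≤ b) (hcd : c ≤ d) :
    (∫ v in a..b, ∫ s in c..d, F v s) = ∫ s in c..d, ∫ v in a..b, F v s := by
  rw [intervalIntegral.integral_of_le hab, intervalIntegral.integral_of_le hcd]
  simp_rw [intervalIntegral.integral_of_le hab, intervalIntegral.integral_of_le hcd]
  exact set_swap F hF a b c d

/-- rectangle Fubini for interval integrals -/
lemma swap_rect (F : ℝ → ℝ → ℝ) (hF : Continuous (Function.uncurry F)) (a b c d : ℝ) :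
    (∫ v in a..b, ∫ s in c..d, F v s) = ∫ s in c..d, ∫ v in a..b, F v s := by
  rcases le_total a b with hab | hab <;> rcases le_total c d with hcd | hcd
  · exact swap_rect_core F hF hab hcd
  · have h := swap_rect_core F hF hab hcd
    rw [intervalIntegral.integral_symm d c]
    simp_rw [intervalIntegral.integral_symm d c]
    rw [intervalIntegral.integral_neg, h]
  · have h := swap_rect_core F hF hab hcd
    rw [intervalIntegral.integral_symm b a]
    simp_rw [intervalIntegral.integral_symm b a]
    rw [h]
    simp_rw [intervalIntegral.integral_neg]
  · have h := swap_rect_core F hF hab hcd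
    rw [intervalIntegral.integral_symm b a, intervalIntegral.integral_symm d c]
    simp_rw [intervalIntegral.integral_symm b a, intervalIntegral.integral_symm d c]
    rw [intervalIntegral.integral_neg, h]
    simp_rw [intervalIntegral.integral_neg]

/-- triangle Fubini: swap the order on `{0 ≤ v ≤ u ≤ t}` for continuous integrands -/
lemma swap_triangle (F : ℝ → ℝ → ℝ) (hF : Continuous (Function.uncurry F))
    {t : ℝ} (ht : 0 ≤ t) :
    (∫ u in (0:ℝ)..t, ∫ v in (0:ℝ)..u, F v u) = ∫ v in (0:ℝ)..t, ∫ u in v..t, F v u := by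
  set g : ℝ → ℝ → ℝ := fun v u => if v ≤ u then F v u else 0 with hg
  have hgint : IntegrableOn (fun p : ℝ × ℝ => g p.1 p.2) (Ioc 0 t ×ˢ Ioc 0 t)
      ((volume : Measure ℝ).prod volume) := by
    have hFi : IntegrableOn (Function.uncurry F) (Ioc 0 t ×ˢ Ioc 0 t)
        ((volume : Measure ℝ).prod volume) :=
      (hF.continuousOn.integrableOn_compact (isCompact_Icc.prod isCompact_Icc)).mono_set
        (prod_mono Ioc_subset_Icc_self Ioc_subset_Icc_self)
    have : (fun p : ℝ × ℝ => g p.1 p.2)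
        = ({p : ℝ × ℝ | p.1 ≤ p.2}).indicator (Function.uncurry F) := by
      funext p
      by_cases h : p.1 ≤ p.2 <;> simp [hg, h, Set.indicator, Function.uncurry]
    rw [IntegrableOn, this]
    exact (hFi.indicator (measurableSet_le measurable_fst measurable_snd)).congr_set_ae
      (by rfl)
  have hgswap : IntegrableOn (fun p : ℝ × ℝ => g p.2 p.1) (Ioc 0 t ×ˢ Ioc 0 t)
      ((volume : Measure ℝ).prod volume) := by
    have hFi : IntegrableOn (fun p : ℝ × ℝ => F p.2 p.1) (Ioc 0 t ×ˢ Ioc 0 t)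
        ((volume : Measure ℝ).prod volume) :=
      (((hF.comp continuous_swap).continuousOn).integrableOn_compact
        (isCompact_Icc.prod isCompact_Icc)).mono_set
        (prod_mono Ioc_subset_Icc_self Ioc_subset_Icc_self)
    have : (fun p : ℝ × ℝ => g p.2 p.1)
        = ({p : ℝ × ℝ | p.2 ≤ p.1}).indicator (fun p => F p.2 p.1) := by
      funext p
      by_cases h : p.2 ≤ p.1 <;> simp [hg, h, Set.indicator]
    rw [IntegrableOn, this]
    exact hFi.indicator (measurableSet_le measurable_snd measurable_fst)
  -- left side
  rw [intervalIntegral.integral_of_le ht, intervalIntegral.integral_of_le ht]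
  have L : ∀ u ∈ Ioc (0:ℝ) t, (∫ v in (0:ℝ)..u, F v u) = ∫ v in Ioc 0 t, g v u := by
    intro u hu
    rw [intervalIntegral.integral_of_le hu.1.le]
    have : (fun v => g v u) = (Iic u).indicator (fun v => F v u) := by
      funext v; by_cases h : v ≤ u <;> simp [hg, h, Set.indicator]
    rw [this, MeasureTheory.setIntegral_indicator measurableSet_Iic,
      show Ioc (0:ℝ) t ∩ Iic u = Ioc 0 u by
        ext v
        simp only [mem_Ioc, mem_inter_iff, mem_Iic]
        constructor
        · rintro ⟨⟨h1, _⟩, h2⟩; exact ⟨h1, h2⟩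
        · rintro ⟨h1, h2⟩; exact ⟨⟨h1, h2.trans hu.2⟩, h2⟩]
  have R : ∀ v ∈ Ioc (0:ℝ) t, (∫ u in v..t, F v u) = ∫ u in Ioc 0 t, g v u := by
    intro v hv
    have hind : (fun u => g v u) = (Ici v).indicator (fun u => F v u) := by
      funext u; by_cases h : v ≤ u <;> simp [hg, h, Set.indicator]
    have hset : Ioc (0:ℝ) t ∩ Ici v = Icc v t := by
      ext u
      simp only [mem_Ioc, mem_inter_iff, mem_Ici, mem_Icc]
      constructor
      · rintro ⟨⟨_, h2⟩, h3⟩; exact ⟨h3, h2⟩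
      · rintro ⟨h1, h2⟩; exact ⟨⟨lt_of_lt_of_le hv.1 h1, h2⟩, h1⟩
    rw [intervalIntegral.integral_of_le hv.2, hind,
      MeasureTheory.setIntegral_indicator measurableSet_Ici, hset,
      MeasureTheory.integral_Icc_eq_integral_Ioc]
  rw [MeasureTheory.setIntegral_congr_fun measurableSet_Ioc L,
    MeasureTheory.setIntegral_congr_fun measurableSet_Ioc R]
  have := MeasureTheory.integral_integral_swap (μ := volume.restrict (Ioc 0 t))
    (ν := volume.restrict (Ioc 0 t)) (f := fun u v => g v u) ?_
  · exact this
  · rw [Measure.prod_restrict]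
    exact hgswap

/-- A continuous function whose primitive vanishes on `[0,τ]` vanishes there. -/
lemma eq_zero_of_primitive_zero (h : ℝ → ℝ) (hh : Continuous h) {τ : ℝ} (hτ : 0 < τ)
    (hz : ∀ t ∈ Icc (0:ℝ) τ, (∫ u in (0:ℝ)..t, h u) = 0) :
    ∀ t ∈ Icc (0:ℝ) τ, h t = 0 := by
  intro t0 ht0
  have hd : HasDerivAt (fun t => ∫ u in (0:ℝ)..t, h u) (h t0) t0 :=
    intervalIntegral.integral_hasDerivAt_right (contII h hh 0 t0)
      (hh.stronglyMeasurableAtFilter _ _) hh.continuousAt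
  have h1 : HasDerivWithinAt (fun t => ∫ u in (0:ℝ)..t, h u) (h t0) (Icc 0 τ) t0 :=
    hd.hasDerivWithinAt
  have h2 : HasDerivWithinAt (fun t => ∫ u in (0:ℝ)..t, h u) 0 (Icc 0 τ) t0 :=
    (hasDerivWithinAt_const t0 _ (0:ℝ)).congr (fun y hy => hz y hy) (hz t0 ht0)
  exact ((uniqueDiffOn_Icc hτ) t0 ht0).eq_deriv _ h1 h2

lemma key_step (G G' : ℝ → ℝ → ℝ) (x : ℝ → ℝ)
    (hG' : Continuous (Function.uncurry G'))
    (hG0 : Continuous (G 0)) (hx : Continuous x)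
    (a b a' b' : ℝ → ℝ) {τ : ℝ}
    (hac : Continuous a) (hbc : Continuous b)
    (ha'c : Continuous a') (hb'c : Continuous b')
    (had : ∀ u ∈ Ioo (0:ℝ) τ, HasDerivAt a (a' u) u)
    (hbd : ∀ u ∈ Ioo (0:ℝ) τ, HasDerivAt b (b' u) u)
    (hab0 : a 0 = b 0)
    (hFTC : ∀ u ∈ Icc (0:ℝ) τ, ∀ s, G u s = G 0 s + ∫ v in (0:ℝ)..u, G' v s)
    {t : ℝ} (ht : t ∈ Icc (0:ℝ) τ) :
    (∫ s in a t..b t, G t s * x s)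
      = ∫ u in (0:ℝ)..t,
          (b' u * (G u (b u) * x (b u)) - a' u * (G u (a u) * x (a u))
            + ∫ s in a u..b u, G' u s * x s) := by
  obtain ⟨h0t, htτ⟩ := ht
  -- substitution helper
  have subst : ∀ (c c' : ℝ → ℝ), Continuous c → Continuous c' →
      (∀ u ∈ Ioo (0:ℝ) τ, HasDerivAt c (c' u) u) →
      ∀ v w : ℝ, 0 ≤ v → v ≤ w → w ≤ t → ∀ g : ℝ → ℝ, Continuous g →
      (∫ u in v..w, c' u * g (c u)) = ∫ s in (c v)..(c w), g s := by
    intro c c' hc hc' hcd v w hv hvw hwt g hg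
    have hder : ∀ u ∈ Ioo (min v w) (max v w), HasDerivWithinAt c (c' u) (Ioi u) u := by
      intro u hu
      rw [min_eq_left hvw, max_eq_right hvw] at hu
      exact (hcd u ⟨lt_of_le_of_lt hv hu.1,
        lt_of_lt_of_le hu.2 (le_trans hwt htτ)⟩).hasDerivWithinAt
    have := intervalIntegral.integral_comp_smul_deriv'' (a := v) (b := w)
      hc.continuousOn hder hc'.continuousOn (hg.continuousOn)
    simpa [Function.comp, smul_eq_mul] using this
  set h : ℝ → ℝ := fun s => G 0 s * x s with hh
  have hhc : Continuous h := hG0.mul hx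
  set Q : ℝ → ℝ → ℝ := fun v s => G' v s * x s with hQ
  have hQc : Continuous (Function.uncurry Q) := by
    apply hG'.mul (hx.comp continuous_snd)
  have hQc1 : ∀ v, Continuous (Q v) := fun v =>
    hQc.comp (Continuous.prodMk_right v)
  -- continuity of the inner primitive of G'
  have hprim : ∀ (c : ℝ → ℝ), Continuous c →
      Continuous fun u => ∫ v in (0:ℝ)..u, G' v (c u) := by
    intro c hc
    exact intervalIntegral.continuous_parametric_intervalIntegral_of_continuous
      (f := fun u v => G' v (c u))
      (hG'.comp (continuous_snd.prodMk (hc.comp continuous_fst))) continuous_id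
  -- double-integral part of one boundary term
  have bt2 : ∀ (c c' : ℝ → ℝ), Continuous c → Continuous c' →
      (∀ u ∈ Ioo (0:ℝ) τ, HasDerivAt c (c' u) u) →
      (∫ u in (0:ℝ)..t, c' u * ((∫ v in (0:ℝ)..u, G' v (c u)) * x (c u)))
        = ∫ v in (0:ℝ)..t, ∫ s in (c v)..(c t), Q v s := by
    intro c c' hc hc' hcd
    have congr2 : ∀ u ∈ uIcc (0:ℝ) t,
        c' u * ((∫ v in (0:ℝ)..u, G' v (c u)) * x (c u))
          = ∫ v in (0:ℝ)..u, c' u * (G' v (c u) * x (c u)) := by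
      intro u _
      rw [intervalIntegral.integral_const_mul]
      congr 1
      rw [intervalIntegral.integral_mul_const]
    rw [intervalIntegral.integral_congr congr2]
    have hFc : Continuous (Function.uncurry
        fun v u => c' u * (G' v (c u) * x (c u))) := by
      apply Continuous.mul (hc'.comp continuous_snd)
      apply Continuous.mul
      · exact hG'.comp (continuous_fst.prodMk (hc.comp continuous_snd))
      · exact hx.comp (hc.comp continuous_snd)
    rw [swap_triangle _ hFc h0t]
    apply intervalIntegral.integral_congr
    intro v hv
    rw [uIcc_of_le h0t] at hv
    exact subst c c' hc hc' hcd v t hv.1 hv.2 le_rfl (Q v) (hQc1 v)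
  -- expand the integrand of the right-hand side
  have hPb := hprim b hbc
  have hPa := hprim a hac
  have congrψ : ∀ u ∈ uIcc (0:ℝ) t,
      (b' u * (G u (b u) * x (b u)) - a' u * (G u (a u) * x (a u))
        + ∫ s in a u..b u, G' u s * x s)
      = ((b' u * h (b u) + b' u * ((∫ v in (0:ℝ)..u, G' v (b u)) * x (b u)))
          - (a' u * h (a u) + a' u * ((∫ v in (0:ℝ)..u, G' v (a u)) * x (a u))))
        + ∫ s in a u..b u, Q u s := by
    intro u hu
    rw [uIcc_of_le h0t] at hu
    rw [hFTC u ⟨hu.1, le_trans hu.2 htτ⟩ (b u), hFTC u ⟨hu.1, le_trans hu.2 htτ⟩ (a u)]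
    simp only [hh, hQ]
    ring
  rw [intervalIntegral.integral_congr congrψ]
  -- continuity of the five pieces
  have cX1 : Continuous fun u => b' u * h (b u) := hb'c.mul (hhc.comp hbc)
  have cX2 : Continuous fun u => b' u * ((∫ v in (0:ℝ)..u, G' v (b u)) * x (b u)) :=
    hb'c.mul (hPb.mul (hx.comp hbc))
  have cY1 : Continuous fun u => a' u * h (a u) := ha'c.mul (hhc.comp hac)
  have cY2 : Continuous fun u => a' u * ((∫ v in (0:ℝ)..u, G' v (a u)) * x (a u)) :=
    ha'c.mul (hPa.mul (hx.comp hac))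
  have cC : Continuous fun u => ∫ s in a u..b u, Q u s := continuous_moving Q hQc a b hac hbc
  -- split the integral
  rw [intervalIntegral.integral_add
      (((contII _ cX1 0 t).add (contII _ cX2 0 t)).sub
        ((contII _ cY1 0 t).add (contII _ cY2 0 t))) (contII _ cC 0 t),
    intervalIntegral.integral_sub ((contII _ cX1 0 t).add (contII _ cX2 0 t))
      ((contII _ cY1 0 t).add (contII _ cY2 0 t)),
    intervalIntegral.integral_add (contII _ cX1 0 t) (contII _ cX2 0 t),
    intervalIntegral.integral_add (contII _ cY1 0 t) (contII _ cY2 0 t)]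
  have e1 : (∫ u in (0:ℝ)..t, b' u * h (b u)) = ∫ s in (b 0)..(b t), h s :=
    subst b b' hbc hb'c hbd 0 t le_rfl h0t le_rfl h hhc
  have e3 : (∫ u in (0:ℝ)..t, a' u * h (a u)) = ∫ s in (a 0)..(a t), h s :=
    subst a a' hac ha'c had 0 t le_rfl h0t le_rfl h hhc
  have e2 := bt2 b b' hbc hb'c hbd
  have e4 := bt2 a a' hac ha'c had
  rw [e1, e2, e3, e4]
  -- combine the double integrals
  have cMb : Continuous fun v => ∫ s in (b v)..(b t), Q v s :=
    continuous_moving Q hQc b (fun _ => b t) hbc continuous_const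
  have cMa : Continuous fun v => ∫ s in (a v)..(a t), Q v s :=
    continuous_moving Q hQc a (fun _ => a t) hac continuous_const
  have cMc : Continuous fun v => ∫ s in (a v)..(b v), Q v s :=
    continuous_moving Q hQc a b hac hbc
  have comb : (∫ v in (0:ℝ)..t, ∫ s in (b v)..(b t), Q v s)
      - (∫ v in (0:ℝ)..t, ∫ s in (a v)..(a t), Q v s)
      + (∫ v in (0:ℝ)..t, ∫ s in (a v)..(b v), Q v s)
      = ∫ v in (0:ℝ)..t, ∫ s in (a t)..(b t), Q v s := by
    rw [← intervalIntegral.integral_sub (contII _ cMb 0 t) (contII _ cMa 0 t),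
      ← intervalIntegral.integral_add (f := fun v => (∫ s in (b v)..(b t), Q v s) - ∫ s in (a v)..(a t), Q v s) ((contII _ (cMb.sub cMa) 0 t)) (contII _ cMc 0 t)]
    apply intervalIntegral.integral_congr
    intro v _
    have A1 : (∫ s in (a v)..(b v), Q v s) + (∫ s in (b v)..(b t), Q v s)
        = ∫ s in (a v)..(b t), Q v s :=
      intervalIntegral.integral_add_adjacent_intervals
        (contII _ (hQc1 v) _ _) (contII _ (hQc1 v) _ _)
    have A2 : (∫ s in (a v)..(a t), Q v s) + (∫ s in (a t)..(b t), Q v s)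
        = ∫ s in (a v)..(b t), Q v s :=
      intervalIntegral.integral_add_adjacent_intervals
        (contII _ (hQc1 v) _ _) (contII _ (hQc1 v) _ _)
    dsimp only
    linarith
  have swaprect : (∫ v in (0:ℝ)..t, ∫ s in (a t)..(b t), Q v s)
      = ∫ s in (a t)..(b t), ∫ v in (0:ℝ)..t, Q v s := swap_rect Q hQc 0 t (a t) (b t)
  have hcombh : (∫ s in (b 0)..(b t), h s) - (∫ s in (a 0)..(a t), h s)
      = ∫ s in (a t)..(b t), h s := by
    have A2 : (∫ s in (a 0)..(a t), h s) + (∫ s in (a t)..(b t), h s)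
        = ∫ s in (a 0)..(b t), h s :=
      intervalIntegral.integral_add_adjacent_intervals
        (contII _ hhc _ _) (contII _ hhc _ _)
    rw [← hab0]
    linarith
  have hPrim : Continuous fun s => ∫ v in (0:ℝ)..t, G' v s := by
    exact intervalIntegral.continuous_parametric_intervalIntegral_of_continuous
      (f := fun s v => G' v s) (hG'.comp (continuous_snd.prodMk continuous_fst))
      continuous_const
  have final1 : (∫ s in (a t)..(b t), ∫ v in (0:ℝ)..t, Q v s)
      = ∫ s in (a t)..(b t), (∫ v in (0:ℝ)..t, G' v s) * x s := by
    apply intervalIntegral.integral_congr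
    intro s _
    simp only [hQ]
    rw [intervalIntegral.integral_mul_const]
  have final2 : (∫ s in (a t)..(b t), G t s * x s)
      = (∫ s in (a t)..(b t), (∫ v in (0:ℝ)..t, G' v s) * x s)
        + ∫ s in (a t)..(b t), h s := by
    rw [← intervalIntegral.integral_add (f := fun s => (∫ v in (0:ℝ)..t, G' v s) * x s) (contII _ (hPrim.mul hx) _ _) (contII _ hhc _ _)]
    apply intervalIntegral.integral_congr
    intro s _
    dsimp only
    rw [hFTC t ⟨h0t, htτ⟩ s]
    simp only [hh]
    ring
  linarith


set_option maxHeartbeats 1000000 in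
/-- **Theorem 1 (local part): local existence and uniqueness** for the weakly regular
Volterra integral equation of the first kind
`∑_{i=1}^{n} ∫_{α_{i-1}(t)}^{α_i(t)} K_i(t,s) x(s) ds = f(t)`.
If `D(0) < 1` then there is `τ ∈ (0,T]` such that the equation has exactly one
continuous solution on `[0,τ]`. -/
theorem local_existence_uniqueness_weakly_regular_VIE
    (n : ℕ) (hn : 1 ≤ n) (T : ℝ) (hT : 0 < T)
    (α α' : ℕ → ℝ → ℝ) (K K' : ℕ → ℝ → ℝ → ℝ) (f f' : ℝ → ℝ)
    (hα0 : ∀ t, α 0 t = 0)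
    (hαn : ∀ t, α n t = t)
    (hαderiv : ∀ i, i ≤ n → ∀ t ∈ Icc (0:ℝ) T, HasDerivAt (α i) (α' i t) t)
    (hα'cont : ∀ i, i ≤ n → ContinuousOn (α' i) (Icc 0 T))
    (hαinit : ∀ i, i ≤ n → α i 0 = 0)
    (hαchain : ∀ t ∈ Ioc (0:ℝ) T, ∀ i, 1 ≤ i → i ≤ n → α (i - 1) t < α i t)
    (hKcont : ∀ i, 1 ≤ i → i ≤ n →
      ContinuousOn (fun p : ℝ × ℝ => K i p.1 p.2) (Icc 0 T ×ˢ Icc 0 T))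
    (hKderiv : ∀ i, 1 ≤ i → i ≤ n → ∀ s ∈ Icc (0:ℝ) T, ∀ t ∈ Icc (0:ℝ) T,
      HasDerivAt (fun u => K i u s) (K' i t s) t)
    (hK'cont : ∀ i, 1 ≤ i → i ≤ n →
      ContinuousOn (fun p : ℝ × ℝ => K' i p.1 p.2) (Icc 0 T ×ˢ Icc 0 T))
    (hfderiv : ∀ t ∈ Icc (0:ℝ) T, HasDerivAt f (f' t) t)
    (hf'cont : ContinuousOn f' (Icc 0 T))
    (hf0 : f 0 = 0)
    (hKn : ∀ t ∈ Icc (0:ℝ) T, K n t t ≠ 0)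
    -- `D(0) < 1`
    (hD : ∑ i ∈ Finset.Icc 1 (n - 1),
        |α' i 0 * (K n 0 0)⁻¹| * |K i 0 (α i 0) - K (i + 1) 0 (α i 0)| < 1) :
    ∃ τ ∈ Ioc (0:ℝ) T, ∃ x : ℝ → ℝ,
      (ContinuousOn x (Icc 0 τ) ∧
        ∀ t ∈ Icc (0:ℝ) τ,
          ∑ i ∈ Finset.Icc 1 n, ∫ s in α (i - 1) t..α i t, K i t s * x s = f t) ∧
      ∀ y : ℝ → ℝ,
        (ContinuousOn y (Icc 0 τ) ∧
          ∀ t ∈ Icc (0:ℝ) τ,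
            ∑ i ∈ Finset.Icc 1 n, ∫ s in α (i - 1) t..α i t, K i t s * y s = f t) →
        ∀ t ∈ Icc (0:ℝ) τ, y t = x t := by
  have hT0 : (0:ℝ) ≤ T := hT.le
  -- clamping to [0, T]
  set clT : ℝ → ℝ := fun r => max 0 (min r T) with hclT_def
  have hclTc : Continuous clT := continuous_const.max (continuous_id.min continuous_const)
  have hclTmem : ∀ r, clT r ∈ Icc (0:ℝ) T := fun r =>
    ⟨le_max_left _ _, max_le hT0 (min_le_right r T)⟩
  have hclTid : ∀ r ∈ Icc (0:ℝ) T, clT r = r := by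
    intro r hr
    simp only [hclT_def]
    rw [min_eq_left hr.2, max_eq_right hr.1]
  have hclT0 : clT 0 = 0 := hclTid 0 ⟨le_rfl, hT0⟩
  -- continuous avatars
  have hαca : ∀ i, i ≤ n → ∀ r ∈ Icc (0:ℝ) T, ContinuousAt (α i) r := fun i hi r hr =>
    (hαderiv i hi r hr).continuousAt
  set A : ℕ → ℝ → ℝ := fun i r => α i (clT r) with hA_def
  have hAc : ∀ i, i ≤ n → Continuous (A i) := by
    intro i hi
    rw [continuous_iff_continuousAt]
    intro r
    exact (hαca i hi (clT r) (hclTmem r)).comp hclTc.continuousAt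
  have hAeq : ∀ i, ∀ r ∈ Icc (0:ℝ) T, A i r = α i r := by
    intro i r hr; simp only [hA_def, hclTid r hr]
  set A' : ℕ → ℝ → ℝ := fun i r => α' i (clT r) with hA'_def
  have hA'c : ∀ i, i ≤ n → Continuous (A' i) := fun i hi =>
    (hα'cont i hi).comp_continuous hclTc hclTmem
  set Kc : ℕ → ℝ → ℝ → ℝ := fun i u s => K i (clT u) (clT s) with hKc_def
  have hKcc : ∀ i, 1 ≤ i → i ≤ n → Continuous (Function.uncurry (Kc i)) := by
    intro i h1 h2
    exact (hKcont i h1 h2).comp_continuous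
      ((hclTc.comp continuous_fst).prodMk (hclTc.comp continuous_snd))
      (fun p => ⟨hclTmem _, hclTmem _⟩)
  set K'c : ℕ → ℝ → ℝ → ℝ := fun i u s => K' i (clT u) (clT s) with hK'c_def
  have hK'cc : ∀ i, 1 ≤ i → i ≤ n → Continuous (Function.uncurry (K'c i)) := by
    intro i h1 h2
    exact (hK'cont i h1 h2).comp_continuous
      ((hclTc.comp continuous_fst).prodMk (hclTc.comp continuous_snd))
      (fun p => ⟨hclTmem _, hclTmem _⟩)
  set fc' : ℝ → ℝ := fun r => f' (clT r) with hfc'_def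
  have hfc'c : Continuous fc' := hf'cont.comp_continuous hclTc hclTmem
  set invKn : ℝ → ℝ := fun r => (K n (clT r) (clT r))⁻¹ with hinvKn_def
  have hinvKnc : Continuous invKn := by
    apply Continuous.inv₀
    · exact (hKcont n hn le_rfl).comp_continuous (hclTc.prodMk hclTc)
        (fun r => ⟨hclTmem _, hclTmem _⟩)
    · intro r; exact hKn (clT r) (hclTmem r)
  -- derivative values of the extreme curves
  have hA'top : ∀ r ∈ Icc (0:ℝ) T, α' n r = 1 := by
    intro r hr
    have h1 : HasDerivAt (α n) (α' n r) r := hαderiv n le_rfl r hr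
    have h2 : HasDerivAt (α n) 1 r := by
      have : HasDerivAt (fun t : ℝ => t) 1 r := hasDerivAt_id r
      exact this.congr_of_eventuallyEq (Filter.Eventually.of_forall fun t => (hαn t))
    exact h1.unique h2
  have hA'bot : ∀ r ∈ Icc (0:ℝ) T, α' 0 r = 0 := by
    intro r hr
    have h1 : HasDerivAt (α 0) (α' 0 r) r := hαderiv 0 (Nat.zero_le n) r hr
    have h2 : HasDerivAt (α 0) 0 r := by
      have : HasDerivAt (fun _ : ℝ => (0:ℝ)) 0 r := hasDerivAt_const r 0
      exact this.congr_of_eventuallyEq (Filter.Eventually.of_forall fun t => (hα0 t))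
    exact h1.unique h2
  -- monotonicity of the curve chain
  have hmono : ∀ t ∈ Icc (0:ℝ) T, ∀ i j : ℕ, i ≤ j → j ≤ n → α i t ≤ α j t := by
    intro t ht i j hij hjn
    rcases eq_or_lt_of_le ht.1 with h0 | h0
    · rw [← h0, hαinit i (le_trans hij hjn), hαinit j hjn]
    · have claim : ∀ j : ℕ, j ≤ n → ∀ i : ℕ, i ≤ j → α i t ≤ α j t := by
        intro j
        induction j with
        | zero => intro _ i hi; interval_cases i; exact le_rfl
        | succ m ihm =>
          intro hmn i hi
          rcases Nat.lt_or_ge i (m+1) with him | him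
          · have him' : i ≤ m := Nat.lt_succ_iff.mp him
            have h1 : α i t ≤ α m t := ihm (le_trans (Nat.le_succ m) hmn) i him'
            have h2 : α m t < α (m+1) t := by
              have := hαchain t ⟨h0, ht.2⟩ (m+1) (Nat.succ_le_succ (Nat.zero_le m)) hmn
              simpa using this
            linarith
          · have : i = m + 1 := le_antisymm hi him
            rw [this]
      exact claim j hjn i hij
  have hrange : ∀ t ∈ Icc (0:ℝ) T, ∀ i, i ≤ n → α i t ∈ Icc 0 t := by
    intro t ht i hi
    constructor
    · have := hmono t ht 0 i (Nat.zero_le i) hi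
      rwa [hα0 t] at this
    · have := hmono t ht i n hi le_rfl
      rwa [hαn t] at this
  -- FTC representation of the kernels
  have hFTCK : ∀ i, 1 ≤ i → i ≤ n → ∀ u ∈ Icc (0:ℝ) T, ∀ s : ℝ,
      Kc i u s = Kc i 0 s + ∫ v in (0:ℝ)..u, K'c i v s := by
    intro i h1 h2 u hu s
    set s' : ℝ := clT s with hs'
    have hsub : uIcc (0:ℝ) u ⊆ Icc (0:ℝ) T := by
      rw [uIcc_of_le hu.1]
      exact Icc_subset_Icc le_rfl hu.2
    have hderall : ∀ v ∈ uIcc (0:ℝ) u, HasDerivAt (fun r => K i r s') (K' i v s') v :=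
      fun v hv => hKderiv i h1 h2 s' (hclTmem s) v (hsub hv)
    have hint : IntervalIntegrable (fun v => K' i v s') MeasureTheory.volume 0 u := by
      apply ContinuousOn.intervalIntegrable
      have : ContinuousOn (fun v => K' i v s') (Icc (0:ℝ) T) := by
        apply (hK'cont i h1 h2).comp (continuous_id.prodMk continuous_const).continuousOn
        intro v hv
        exact ⟨hv, hclTmem s⟩
      exact this.mono hsub
    have hftc := intervalIntegral.integral_eq_sub_of_hasDerivAt hderall hint
    have hcongr : (∫ v in (0:ℝ)..u, K'c i v s) = ∫ v in (0:ℝ)..u, K' i v s' := by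
      apply intervalIntegral.integral_congr
      intro v hv
      simp only [hK'c_def, hclTid v (hsub hv), hs']
    rw [hcongr, hftc]
    simp only [hKc_def, hclTid u hu, hclT0]
    ring
  -- uniform bounds for `K'` and for `(K n t t)⁻¹`
  have hMex : ∀ i : ℕ, ∃ C : ℝ, 0 ≤ C ∧ ∀ u s : ℝ,
      1 ≤ i → i ≤ n → |K' i (clT u) (clT s)| ≤ C := by
    intro i
    by_cases hi : 1 ≤ i ∧ i ≤ n
    · obtain ⟨C, hC⟩ := (isCompact_Icc.prod isCompact_Icc).exists_bound_of_continuousOn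
        (hK'cont i hi.1 hi.2)
      refine ⟨max C 0, le_max_right _ _, fun u s _ _ => ?_⟩
      have := hC (clT u, clT s) ⟨hclTmem u, hclTmem s⟩
      have h2 : |K' i (clT u) (clT s)| ≤ C := by simpa [Real.norm_eq_abs] using this
      exact h2.trans (le_max_left _ _)
    · refine ⟨0, le_rfl, fun u s h1 h2 => absurd ⟨h1, h2⟩ hi⟩
  choose M hM0 hMb using hMex
  obtain ⟨Ci, hCi⟩ : ∃ C : ℝ, ∀ r : ℝ, |invKn r| ≤ C := by
    have hctsinv : ContinuousOn (fun u : ℝ => (K n u u)⁻¹) (Icc 0 T) := by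
      apply ContinuousOn.inv₀
      · exact (hKcont n hn le_rfl).comp (continuous_id.prodMk continuous_id).continuousOn
          (fun u hu => ⟨hu, hu⟩)
      · intro u hu; exact hKn u hu
    obtain ⟨C, hC⟩ := isCompact_Icc.exists_bound_of_continuousOn hctsinv
    refine ⟨C, fun r => ?_⟩
    have := hC (clT r) (hclTmem r)
    simpa [hinvKn_def, Real.norm_eq_abs, abs_inv] using this
  have hCi0 : 0 ≤ Ci := le_trans (abs_nonneg _) (hCi 0)
  set S : ℝ := ∑ i ∈ Finset.Icc 1 n, M i with hS_def
  have hS0 : 0 ≤ S := Finset.sum_nonneg fun i _ => hM0 i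
  -- the continuous function D
  set Dfun : ℝ → ℝ := fun r => ∑ i ∈ Finset.Icc 1 (n-1),
      |A' i r * invKn r| * |Kc i r (A i r) - Kc (i+1) r (A i r)| with hDfun_def
  have hiok : ∀ i ∈ Finset.Icc 1 (n-1), 1 ≤ i ∧ i ≤ n ∧ i + 1 ≤ n := by
    intro i hi
    rw [Finset.mem_Icc] at hi
    omega
  have hDc : Continuous Dfun := by
    apply continuous_finset_sum
    intro i hi
    obtain ⟨h1, h2, h3⟩ := hiok i hi
    have c1 : Continuous fun r => Kc i r (A i r) :=
      (hKcc i h1 h2).comp (continuous_id.prodMk (hAc i h2))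
    have c2 : Continuous fun r => Kc (i+1) r (A i r) :=
      (hKcc (i+1) (by omega) h3).comp (continuous_id.prodMk (hAc i h2))
    exact (((hA'c i h2).mul hinvKnc).abs).mul ((c1.sub c2).abs)
  have hDnonneg : ∀ r, 0 ≤ Dfun r := fun r =>
    Finset.sum_nonneg fun i _ => mul_nonneg (abs_nonneg _) (abs_nonneg _)
  have hD0lt : Dfun 0 < 1 := by
    have : Dfun 0 = ∑ i ∈ Finset.Icc 1 (n - 1),
        |α' i 0 * (K n 0 0)⁻¹| * |K i 0 (α i 0) - K (i + 1) 0 (α i 0)| := by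
      apply Finset.sum_congr rfl
      intro i hi
      obtain ⟨h1, h2, h3⟩ := hiok i hi
      have hAi0 : A i 0 = 0 := by
        simp only [hA_def, hclT0, hαinit i h2]
      simp only [hDfun_def, hA'_def, hinvKn_def, hKc_def, hclT0, hAi0,
        hαinit i h2]
    rw [this]; exact hD
  -- choice of τ
  set ε : ℝ := (1 - Dfun 0) / 2 with hε_def
  have hεpos : 0 < ε := by
    simp only [hε_def]; linarith
  obtain ⟨δ, hδpos, hδ⟩ : ∃ δ > 0, ∀ r : ℝ, dist r 0 < δ → dist (Dfun r) (Dfun 0) < ε :=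
    Metric.continuous_iff.mp hDc 0 ε hεpos
  set P : ℝ := Ci * S + 1 with hP_def
  have hPpos : 0 < P := by positivity
  set τ : ℝ := min T (min (δ/2) (ε/2/P)) with hτ_def
  have hτpos : 0 < τ := by
    apply lt_min hT
    apply lt_min (by linarith)
    positivity
  have hτT : τ ≤ T := min_le_left _ _
  have hτ0 : (0:ℝ) ≤ τ := hτpos.le
  have hτδ : τ < δ := lt_of_le_of_lt ((min_le_right _ _).trans (min_le_left _ _)) (by linarith)
  have hτP : Ci * S * τ ≤ ε / 2 := by
    have h1 : τ ≤ ε/2/P := (min_le_right _ _).trans (min_le_right _ _)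
    have h2 : Ci * S ≤ P := by simp only [hP_def]; linarith
    calc Ci * S * τ ≤ P * τ := by nlinarith
      _ ≤ P * (ε/2/P) := by nlinarith
      _ = ε/2 := by
          have hPne : P ≠ 0 := ne_of_gt hPpos
          field_simp
  have hIccτT : Icc (0:ℝ) τ ⊆ Icc (0:ℝ) T := Icc_subset_Icc le_rfl hτT
  have hDτ : ∀ t ∈ Icc (0:ℝ) τ, Dfun t ≤ Dfun 0 + ε := by
    intro t ht
    have : dist t 0 < δ := by
      rw [Real.dist_eq, sub_zero, abs_of_nonneg ht.1]
      exact lt_of_le_of_lt ht.2 hτδ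
    have := hδ t this
    rw [Real.dist_eq] at this
    have := abs_lt.mp this
    linarith [this.1, this.2]
  set q : ℝ := Dfun 0 + ε + ε/2 with hq_def
  have hq1 : q < 1 := by simp only [hq_def, hε_def]; linarith
  have hq0 : 0 ≤ q := by
    have := hDnonneg 0
    simp only [hq_def]; linarith
  -- the basic maps
  set Rmap : (ℝ → ℝ) → ℝ → ℝ := fun x r =>
    (∑ i ∈ Finset.Icc 1 (n-1),
        A' i r * ((Kc i r (A i r) - Kc (i+1) r (A i r)) * x (A i r)))
    + ∑ i ∈ Finset.Icc 1 n, ∫ s in (A (i-1) r)..(A i r), K'c i r s * x s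
    with hRmap_def
  set Phi0 : (ℝ → ℝ) → ℝ → ℝ := fun x r => invKn r * (fc' r - Rmap x r) with hPhi0_def
  have hiok2 : ∀ i ∈ Finset.Icc 1 n, 1 ≤ i ∧ i ≤ n ∧ i - 1 ≤ n := by
    intro i hi; rw [Finset.mem_Icc] at hi; omega
  have hRc : ∀ x : ℝ → ℝ, Continuous x → Continuous (Rmap x) := by
    intro x hx
    apply Continuous.add
    · apply continuous_finset_sum
      intro i hi
      obtain ⟨h1, h2, h3⟩ := hiok i hi
      have c1 : Continuous fun r => Kc i r (A i r) :=
        (hKcc i h1 h2).comp (continuous_id.prodMk (hAc i h2))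
      have c2 : Continuous fun r => Kc (i+1) r (A i r) :=
        (hKcc (i+1) (by omega) h3).comp (continuous_id.prodMk (hAc i h2))
      exact (hA'c i h2).mul ((c1.sub c2).mul (hx.comp (hAc i h2)))
    · apply continuous_finset_sum
      intro i hi
      obtain ⟨h1, h2, h3⟩ := hiok2 i hi
      apply continuous_moving (fun r s => K'c i r s * x s)
        ((hK'cc i h1 h2).mul (hx.comp continuous_snd)) _ _ (hAc (i-1) h3) (hAc i h2)
  have hPhi0c : ∀ x : ℝ → ℝ, Continuous x → Continuous (Phi0 x) := by
    intro x hx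
    exact hinvKnc.mul (hfc'c.sub (hRc x hx))
  -- derivative of avatars inside (0, τ)
  have hAderivIoo : ∀ j, j ≤ n → ∀ u ∈ Ioo (0:ℝ) τ, HasDerivAt (A j) (A' j u) u := by
    intro j hj u hu
    have hmemIoo : u ∈ Ioo (0:ℝ) T := ⟨hu.1, lt_of_lt_of_le hu.2 hτT⟩
    have hnhds : Ioo (0:ℝ) T ∈ nhds u := Ioo_mem_nhds hmemIoo.1 hmemIoo.2
    have hev : A j =ᶠ[nhds u] α j :=
      Filter.eventuallyEq_of_mem hnhds
        (fun r hr => by simp [hA_def, hclTid r (Ioo_subset_Icc_self hr)])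
    have h1 : HasDerivAt (A j) (α' j u) u :=
      (hαderiv j hj u (Ioo_subset_Icc_self hmemIoo)).congr_of_eventuallyEq hev
    have : A' j u = α' j u := by
      simp [hA'_def, hclTid u (Ioo_subset_Icc_self hmemIoo)]
    rwa [this]
  -- the function Psi
  set Psi : (ℝ → ℝ) → ℝ → ℝ := fun x u => ∑ i ∈ Finset.Icc 1 n,
      (A' i u * (Kc i u (A i u) * x (A i u))
        - A' (i-1) u * (Kc i u (A (i-1) u) * x (A (i-1) u))
        + ∫ s in (A (i-1) u)..(A i u), K'c i u s * x s) with hPsi_def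
  have hψc : ∀ (x : ℝ → ℝ), Continuous x → ∀ i, 1 ≤ i → i ≤ n → Continuous (fun u =>
      A' i u * (Kc i u (A i u) * x (A i u))
        - A' (i-1) u * (Kc i u (A (i-1) u) * x (A (i-1) u))
        + ∫ s in (A (i-1) u)..(A i u), K'c i u s * x s) := by
    intro x hx i h1 h2
    have h3 : i - 1 ≤ n := by omega
    have c1 : Continuous fun u => Kc i u (A i u) :=
      (hKcc i h1 h2).comp (continuous_id.prodMk (hAc i h2))
    have c2 : Continuous fun u => Kc i u (A (i-1) u) :=
      (hKcc i h1 h2).comp (continuous_id.prodMk (hAc (i-1) h3))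
    apply Continuous.add
    · exact (((hA'c i h2).mul (c1.mul (hx.comp (hAc i h2))))).sub
        ((hA'c (i-1) h3).mul (c2.mul (hx.comp (hAc (i-1) h3))))
    · exact continuous_moving (fun r s => K'c i r s * x s)
        ((hK'cc i h1 h2).mul (hx.comp continuous_snd)) _ _ (hAc (i-1) h3) (hAc i h2)
  have hPsiC : ∀ (x : ℝ → ℝ), Continuous x → Continuous (Psi x) := by
    intro x hx
    apply continuous_finset_sum
    intro i hi
    obtain ⟨h1, h2, _⟩ := hiok2 i hi
    exact hψc x hx i h1 h2
  -- the fundamental representation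
  have rep : ∀ (x : ℝ → ℝ), Continuous x → ∀ t ∈ Icc (0:ℝ) τ,
      (∑ i ∈ Finset.Icc 1 n, ∫ s in (A (i-1) t)..(A i t), Kc i t s * x s)
        = ∫ u in (0:ℝ)..t, Psi x u := by
    intro x hx t ht
    have hterm : ∀ i ∈ Finset.Icc 1 n,
        (∫ s in (A (i-1) t)..(A i t), Kc i t s * x s)
          = ∫ u in (0:ℝ)..t,
              (A' i u * (Kc i u (A i u) * x (A i u))
                - A' (i-1) u * (Kc i u (A (i-1) u) * x (A (i-1) u))
                + ∫ s in (A (i-1) u)..(A i u), K'c i u s * x s) := by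
      intro i hi
      obtain ⟨h1, h2, h3⟩ := hiok2 i hi
      have hG0 : Continuous (Kc i 0) := by
        have : Continuous fun s => Function.uncurry (Kc i) (0, s) :=
          (hKcc i h1 h2).comp (Continuous.prodMk_right 0)
        simpa [Function.uncurry] using this
      have hab0 : A (i-1) 0 = A i 0 := by
        simp [hA_def, hclT0, hαinit (i-1) h3, hαinit i h2]
      exact key_step (Kc i) (K'c i) x (hK'cc i h1 h2) hG0 hx
        (A (i-1)) (A i) (A' (i-1)) (A' i)
        (hAc (i-1) h3) (hAc i h2) (hA'c (i-1) h3) (hA'c i h2)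
        (hAderivIoo (i-1) h3) (hAderivIoo i h2) hab0
        (fun u hu s => hFTCK i h1 h2 u (hIccτT hu) s) ht
    rw [Finset.sum_congr rfl hterm]
    rw [← intervalIntegral.integral_finset_sum]
    intro i hi
    obtain ⟨h1, h2, _⟩ := hiok2 i hi
    exact contII _ (hψc x hx i h1 h2) 0 t
  -- telescoping: Psi in terms of Rmap
  have telesc : ∀ (x : ℝ → ℝ), ∀ u ∈ Icc (0:ℝ) τ, Psi x u = K n u u * x u + Rmap x u := by
    intro x u hu
    have huT : u ∈ Icc (0:ℝ) T := hIccτT hu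
    have hclu : clT u = u := hclTid u huT
    have htop : A' n u = 1 := by simp [hA'_def, hclu, hA'top u huT]
    have hbot : A' 0 u = 0 := by simp [hA'_def, hclu, hA'bot u huT]
    have hAn : A n u = u := by simp [hA_def, hclu, hαn]
    have hins : Finset.Icc 1 n = insert n (Finset.Icc 1 (n-1)) := by
      ext k; simp only [Finset.mem_Icc, Finset.mem_insert]; omega
    have hnotmem : n ∉ Finset.Icc 1 (n-1) := by simp only [Finset.mem_Icc]; omega
    have hmap : Finset.Icc 1 n = Finset.map (addLeftEmbedding 1) (Finset.Icc 0 (n-1)) := by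
      rw [Finset.map_add_left_Icc]; congr 1; omega
    have hins0 : Finset.Icc 0 (n-1) = insert 0 (Finset.Icc 1 (n-1)) := by
      ext k; simp only [Finset.mem_Icc, Finset.mem_insert]; omega
    have hnotmem0 : 0 ∉ Finset.Icc 1 (n-1) := by simp only [Finset.mem_Icc]; omega
    have e1 : (∑ i ∈ Finset.Icc 1 n, A' i u * (Kc i u (A i u) * x (A i u)))
        = K n u u * x u
          + ∑ i ∈ Finset.Icc 1 (n-1), A' i u * (Kc i u (A i u) * x (A i u)) := by
      rw [hins, Finset.sum_insert hnotmem, htop, hAn]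
      simp [hKc_def, hclu]
    have e2 : (∑ i ∈ Finset.Icc 1 n,
          A' (i-1) u * (Kc i u (A (i-1) u) * x (A (i-1) u)))
        = ∑ i ∈ Finset.Icc 1 (n-1),
            A' i u * (Kc (i+1) u (A i u) * x (A i u)) := by
      rw [hmap, Finset.sum_map]
      simp only [addLeftEmbedding_apply]
      rw [hins0, Finset.sum_insert hnotmem0]
      have hz : A' (1 + 0 - 1) u * (Kc (1+0) u (A (1+0-1) u) * x (A (1+0-1) u)) = 0 := by
        norm_num [hbot]
      rw [hz, zero_add]
      apply Finset.sum_congr rfl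
      intro i hi
      have : 1 + i - 1 = i := by omega
      rw [this, Nat.add_comm 1 i]
    have e3 : Psi x u
        = (∑ i ∈ Finset.Icc 1 n, A' i u * (Kc i u (A i u) * x (A i u)))
          - (∑ i ∈ Finset.Icc 1 n,
              A' (i-1) u * (Kc i u (A (i-1) u) * x (A (i-1) u)))
          + ∑ i ∈ Finset.Icc 1 n, ∫ s in (A (i-1) u)..(A i u), K'c i u s * x s := by
      simp only [hPsi_def]
      rw [← Finset.sum_sub_distrib, ← Finset.sum_add_distrib]
    rw [e3, e1, e2]
    simp only [hRmap_def]
    have e4 : (∑ i ∈ Finset.Icc 1 (n-1), A' i u * (Kc i u (A i u) * x (A i u)))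
        - (∑ i ∈ Finset.Icc 1 (n-1), A' i u * (Kc (i+1) u (A i u) * x (A i u)))
        = ∑ i ∈ Finset.Icc 1 (n-1),
            A' i u * ((Kc i u (A i u) - Kc (i+1) u (A i u)) * x (A i u)) := by
      rw [← Finset.sum_sub_distrib]
      apply Finset.sum_congr rfl
      intro i _
      ring
    linarith [e4]
  -- the contraction estimate
  have keybound : ∀ (x y : ℝ → ℝ), Continuous x → Continuous y →
      ∀ d : ℝ, 0 ≤ d → (∀ r, |x r - y r| ≤ d) →
      ∀ t ∈ Icc (0:ℝ) τ, |Phi0 x t - Phi0 y t| ≤ q * d := by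
    intro x y hx hy d hd hxy t ht
    have htT : t ∈ Icc (0:ℝ) T := hIccτT ht
    -- difference of the two sums
    set J : ℝ := ∑ i ∈ Finset.Icc 1 (n-1),
        A' i t * ((Kc i t (A i t) - Kc (i+1) t (A i t)) * (x (A i t) - y (A i t))) with hJ_def
    set I : ℝ := ∑ i ∈ Finset.Icc 1 n,
        ∫ s in (A (i-1) t)..(A i t), K'c i t s * (x s - y s) with hI_def
    have hdiff : Phi0 x t - Phi0 y t = invKn t * (-(J + I)) := by
      have hR : Rmap x t - Rmap y t = J + I := by
        simp only [hRmap_def, hJ_def, hI_def]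
        rw [show ∀ a b c d : ℝ, (a + b) - (c + d) = (a - c) + (b - d) from by intros; ring,
          ← Finset.sum_sub_distrib, ← Finset.sum_sub_distrib]
        congr 1
        · apply Finset.sum_congr rfl; intro i _; ring
        · apply Finset.sum_congr rfl
          intro i hi
          obtain ⟨h1, h2, h3⟩ := hiok2 i hi
          rw [← intervalIntegral.integral_sub]
          · apply intervalIntegral.integral_congr
            intro s _
            ring
          · exact contII _ (((hK'cc i h1 h2).comp (Continuous.prodMk_right t)).mul hx) _ _
          · exact contII _ (((hK'cc i h1 h2).comp (Continuous.prodMk_right t)).mul hy) _ _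
      simp only [hPhi0_def]
      have : Rmap y t = Rmap x t - (J + I) := by rw [← hR]; ring
      rw [this]
      ring
    rw [hdiff, abs_mul, abs_neg]
    have habsJI : |J + I| ≤ |J| + |I| := abs_add_le J I
    -- bound the jump part
    have hJb : |invKn t| * |J| ≤ Dfun t * d := by
      have h1 : |J| ≤ ∑ i ∈ Finset.Icc 1 (n-1),
          |A' i t * ((Kc i t (A i t) - Kc (i+1) t (A i t)) * (x (A i t) - y (A i t)))| :=
        Finset.abs_sum_le_sum_abs _ _
      have h2 : |invKn t| * |J|
          ≤ ∑ i ∈ Finset.Icc 1 (n-1), |invKn t|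
            * |A' i t * ((Kc i t (A i t) - Kc (i+1) t (A i t)) * (x (A i t) - y (A i t)))| := by
        rw [← Finset.mul_sum]
        exact mul_le_mul_of_nonneg_left h1 (abs_nonneg _)
      apply le_trans h2
      have h3 : ∀ i ∈ Finset.Icc 1 (n-1), |invKn t|
          * |A' i t * ((Kc i t (A i t) - Kc (i+1) t (A i t)) * (x (A i t) - y (A i t)))|
          ≤ (|A' i t * invKn t| * |Kc i t (A i t) - Kc (i+1) t (A i t)|) * d := by
        intro i _
        have heq : |invKn t|
            * |A' i t * ((Kc i t (A i t) - Kc (i+1) t (A i t)) * (x (A i t) - y (A i t)))|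
            = (|A' i t * invKn t| * |Kc i t (A i t) - Kc (i+1) t (A i t)|)
              * |x (A i t) - y (A i t)| := by
          rw [abs_mul, abs_mul, abs_mul]
          ring
        rw [heq]
        exact mul_le_mul_of_nonneg_left (hxy _) (by positivity)
      apply le_trans (Finset.sum_le_sum h3)
      rw [← Finset.sum_mul]
    -- bound the integral part
    have hIb : |invKn t| * |I| ≤ Ci * S * τ * d := by
      have h1 : ∀ i ∈ Finset.Icc 1 n,
          |∫ s in (A (i-1) t)..(A i t), K'c i t s * (x s - y s)| ≤ M i * (d * τ) := by
        intro i hi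
        obtain ⟨h1', h2', h3'⟩ := hiok2 i hi
        have hb : ∀ s ∈ Set.uIoc (A (i-1) t) (A i t), ‖K'c i t s * (x s - y s)‖ ≤ M i * d := by
          intro s _
          rw [Real.norm_eq_abs, abs_mul]
          exact mul_le_mul (hMb i t s h1' h2') (hxy s) (abs_nonneg _) (hM0 i)
        have := intervalIntegral.norm_integral_le_of_norm_le_const hb
        rw [Real.norm_eq_abs] at this
        apply le_trans this
        have hA1 : A i t ∈ Icc (0:ℝ) t := by
          rw [hAeq i t htT]; exact hrange t htT i h2'
        have hA2 : A (i-1) t ∈ Icc (0:ℝ) t := by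
          rw [hAeq (i-1) t htT]; exact hrange t htT (i-1) h3'
        have habs : |A i t - A (i-1) t| ≤ τ := by
          apply abs_le.mpr
          constructor
          · have := hA1.1; have := hA2.2; have := ht.2; linarith
          · have := hA1.2; have := hA2.1; have := ht.2; linarith
        calc M i * d * |A i t - A (i-1) t| ≤ M i * d * τ := by
              exact mul_le_mul_of_nonneg_left habs (mul_nonneg (hM0 i) hd)
          _ = M i * (d * τ) := by ring
      have h2 : |I| ≤ S * (d * τ) := by
        apply le_trans (Finset.abs_sum_le_sum_abs _ _)
        rw [hS_def, Finset.sum_mul]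
        exact Finset.sum_le_sum h1
      calc |invKn t| * |I| ≤ Ci * (S * (d * τ)) := by
            apply mul_le_mul (hCi t) h2 (abs_nonneg _) hCi0
        _ = Ci * S * τ * d := by ring
    calc |invKn t| * |J + I| ≤ |invKn t| * (|J| + |I|) :=
          mul_le_mul_of_nonneg_left habsJI (abs_nonneg _)
      _ = |invKn t| * |J| + |invKn t| * |I| := by ring
      _ ≤ Dfun t * d + Ci * S * τ * d := add_le_add hJb hIb
      _ ≤ (Dfun 0 + ε) * d + (ε/2) * d := by
          apply add_le_add
          · exact mul_le_mul_of_nonneg_right (hDτ t ht) hd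
          · exact mul_le_mul_of_nonneg_right hτP hd
      _ = q * d := by simp only [hq_def]; ring
  -- translation between the original sums and the clamped sums
  have hsum_eq : ∀ (z : ℝ → ℝ), ∀ t ∈ Icc (0:ℝ) τ,
      (∑ i ∈ Finset.Icc 1 n, ∫ s in α (i-1) t..α i t, K i t s * z s)
        = ∑ i ∈ Finset.Icc 1 n, ∫ s in (A (i-1) t)..(A i t), Kc i t s * z s := by
    intro z t ht
    have htT : t ∈ Icc (0:ℝ) T := hIccτT ht
    apply Finset.sum_congr rfl
    intro i hi
    obtain ⟨h1, h2, h3⟩ := hiok2 i hi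
    rw [hAeq (i-1) t htT, hAeq i t htT]
    apply intervalIntegral.integral_congr
    intro s hs
    have hsIcc : s ∈ Icc (0:ℝ) t :=
      (uIcc_subset_Icc (hrange t htT (i-1) h3) (hrange t htT i h2)) hs
    have hsT : s ∈ Icc (0:ℝ) T := ⟨hsIcc.1, le_trans hsIcc.2 (le_trans ht.2 hτT)⟩
    simp only [hKc_def, hclTid t htT, hclTid s hsT]
  -- FTC for f
  have hfint : ∀ t ∈ Icc (0:ℝ) τ, (∫ u in (0:ℝ)..t, fc' u) = f t := by
    intro t ht
    have hsub : uIcc (0:ℝ) t ⊆ Icc 0 T := by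
      rw [uIcc_of_le ht.1]
      exact Icc_subset_Icc le_rfl (le_trans ht.2 hτT)
    have h1 : (∫ u in (0:ℝ)..t, fc' u) = ∫ u in (0:ℝ)..t, f' u :=
      intervalIntegral.integral_congr fun u hu => by
        simp [hfc'_def, hclTid u (hsub hu)]
    rw [h1, intervalIntegral.integral_eq_sub_of_hasDerivAt
        (fun u hu => hfderiv u (hsub hu)) ((hf'cont.mono hsub).intervalIntegrable),
      hf0, sub_zero]
  -- set up the fixed point argument
  have hmemIoc : τ ∈ Ioc (0:ℝ) T := ⟨hτpos, hτT⟩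
  set E : C(Icc (0:ℝ) τ, ℝ) → ℝ → ℝ := fun g r => g (projIcc 0 τ hτ0 r) with hE_def
  have hEc : ∀ g, Continuous (E g) := fun g => g.continuous.comp continuous_projIcc
  have hEeq : ∀ g, ∀ r, ∀ hr : r ∈ Icc (0:ℝ) τ, E g r = g ⟨r, hr⟩ := by
    intro g r hr
    simp [hE_def, projIcc_of_mem hτ0 hr]
  have hEdist : ∀ g1 g2 : C(Icc (0:ℝ) τ, ℝ), ∀ r, |E g1 r - E g2 r| ≤ dist g1 g2 := by
    intro g1 g2 r
    rw [← Real.dist_eq]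
    exact ContinuousMap.dist_apply_le_dist _
  set Φ : C(Icc (0:ℝ) τ, ℝ) → C(Icc (0:ℝ) τ, ℝ) := fun g =>
    ⟨fun t => Phi0 (E g) ↑t, (hPhi0c _ (hEc g)).comp continuous_subtype_val⟩ with hΦ_def
  have hΦapp : ∀ g, ∀ (t : Icc (0:ℝ) τ), Φ g t = Phi0 (E g) ↑t := fun g t => rfl
  have hlip : LipschitzWith (Real.toNNReal q) Φ := by
    apply LipschitzWith.of_dist_le_mul
    intro g1 g2
    rw [Real.coe_toNNReal q hq0, ContinuousMap.dist_le (mul_nonneg hq0 dist_nonneg)]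
    intro t
    rw [Real.dist_eq, hΦapp g1 t, hΦapp g2 t]
    exact keybound (E g1) (E g2) (hEc g1) (hEc g2) (dist g1 g2) dist_nonneg
      (hEdist g1 g2) ↑t t.2
  have hcontr : ContractingWith (Real.toNNReal q) Φ := by
    constructor
    · rw [← Real.toNNReal_one]
      exact (Real.toNNReal_lt_toNNReal_iff one_pos).mpr hq1
    · exact hlip
  set xh : C(Icc (0:ℝ) τ, ℝ) := ContractingWith.fixedPoint Φ hcontr with hxh_def
  have hfix : Φ xh = xh := ContractingWith.fixedPoint_isFixedPt hcontr
  have hxc : Continuous (E xh) := hEc xh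
  have hxfix : ∀ u, ∀ hu : u ∈ Icc (0:ℝ) τ, E xh u = Phi0 (E xh) u := by
    intro u hu
    calc E xh u = xh ⟨u, hu⟩ := hEeq xh u hu
      _ = Φ xh ⟨u, hu⟩ := (ContinuousMap.congr_fun hfix ⟨u, hu⟩).symm
      _ = Phi0 (E xh) u := hΦapp xh ⟨u, hu⟩
  -- fixed point ↔ second kind equation
  have hinveq : ∀ u, u ∈ Icc (0:ℝ) τ → invKn u = (K n u u)⁻¹ := by
    intro u hu
    simp [hinvKn_def, hclTid u (hIccτT hu)]
  have hsk : ∀ u ∈ Icc (0:ℝ) τ, Psi (E xh) u = fc' u := by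
    intro u hu
    have hKnu : K n u u ≠ 0 := hKn u (hIccτT hu)
    have h1 : K n u u * E xh u = fc' u - Rmap (E xh) u := by
      rw [hxfix u hu]
      simp only [hPhi0_def, hinveq u hu]
      rw [← mul_assoc, mul_inv_cancel₀ hKnu, one_mul]
    rw [telesc (E xh) u hu]
    linarith
  -- existence part
  refine ⟨τ, hmemIoc, E xh, ⟨(hEc xh).continuousOn, ?_⟩, ?_⟩
  · intro t ht
    rw [hsum_eq (E xh) t ht, rep (E xh) hxc t ht, ← hfint t ht]
    apply intervalIntegral.integral_congr
    intro u hu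
    have huτ : u ∈ Icc (0:ℝ) τ := by
      rw [uIcc_of_le ht.1] at hu
      exact ⟨hu.1, le_trans hu.2 ht.2⟩
    exact hsk u huτ
  -- uniqueness part
  · rintro y ⟨hyc, hyeq⟩
    set yh : C(Icc (0:ℝ) τ, ℝ) := ContinuousMap.mk _ hyc.restrict with hyh_def
    have hyhapp : ∀ (t : Icc (0:ℝ) τ), yh t = y ↑t := fun t => rfl
    have hyec : Continuous (E yh) := hEc yh
    have hyee : ∀ r, r ∈ Icc (0:ℝ) τ → E yh r = y r := by
      intro r hr
      rw [hEeq yh r hr, hyhapp]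
    have hyeq2 : ∀ t ∈ Icc (0:ℝ) τ,
        (∑ i ∈ Finset.Icc 1 n, ∫ s in (A (i-1) t)..(A i t), Kc i t s * E yh s) = f t := by
      intro t ht
      rw [← hsum_eq (E yh) t ht, ← hyeq t ht]
      apply Finset.sum_congr rfl
      intro i hi
      obtain ⟨h1, h2, h3⟩ := hiok2 i hi
      apply intervalIntegral.integral_congr
      intro s hs
      have htT : t ∈ Icc (0:ℝ) T := hIccτT ht
      have hsIcc : s ∈ Icc (0:ℝ) t :=
        (uIcc_subset_Icc (hrange t htT (i-1) h3) (hrange t htT i h2)) hs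
      dsimp only
      rw [hyee s ⟨hsIcc.1, le_trans hsIcc.2 ht.2⟩]
    have hprim0 : ∀ t ∈ Icc (0:ℝ) τ, (∫ u in (0:ℝ)..t, (Psi (E yh) u - fc' u)) = 0 := by
      intro t ht
      rw [intervalIntegral.integral_sub (contII _ (hPsiC (E yh) hyec) 0 t)
        (contII _ hfc'c 0 t)]
      rw [← rep (E yh) hyec t ht, hfint t ht, hyeq2 t ht, sub_self]
    have hsk2 : ∀ u ∈ Icc (0:ℝ) τ, Psi (E yh) u = fc' u := by
      intro u hu
      have := eq_zero_of_primitive_zero (fun u => Psi (E yh) u - fc' u)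
        ((hPsiC (E yh) hyec).sub hfc'c) hτpos hprim0 u hu
      linarith
    have hyfixpt : ∀ u, ∀ hu : u ∈ Icc (0:ℝ) τ, E yh u = Phi0 (E yh) u := by
      intro u hu
      have hKnu : K n u u ≠ 0 := hKn u (hIccτT hu)
      have h1 : K n u u * E yh u + Rmap (E yh) u = fc' u := by
        rw [← telesc (E yh) u hu]; exact hsk2 u hu
      simp only [hPhi0_def, hinveq u hu]
      rw [show fc' u - Rmap (E yh) u = K n u u * E yh u from by linarith,
        ← mul_assoc, inv_mul_cancel₀ hKnu, one_mul]
    have hyfix : Φ yh = yh := by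
      apply ContinuousMap.ext
      intro t
      rw [hΦapp yh t, ← hyfixpt ↑t t.2, hEeq yh ↑t t.2]
    have hyx : yh = xh := ContractingWith.fixedPoint_unique hcontr hyfix
    intro t ht
    calc y t = yh ⟨t, ht⟩ := (hyhapp ⟨t, ht⟩).symm
      _ = xh ⟨t, ht⟩ := by rw [hyx]
      _ = E xh t := (hEeq xh t ht).symm
end

section
/- (Global existence and uniqueness, Theorem 1, global part.) Let n ≥ 1 and T > 0. Let α_0, α_1, …, α_n : [0,T] → ℝ with α_0(t) = 0 and α_n(t) = t for all t, each α_i continuously differentiable, α_i(0) = 0, and 0 = α_0(t) < α_1(t) < ⋯ < α_{n-1}(t) < α_n(t) = t for all t ∈ (0,T]. Let K_1, …, K_n : [0,T] × [0,T] → ℝ be continuous and have continuous partial derivatives with respect to the first variable t, let f : [0,T] → ℝ be continuously differentiable with f(0) = 0, and suppose K_n(t,t) ≠ 0 for all t ∈ [0,T] and D(0) < 1. Let τ ∈ (0,T] be as in the local existence theorem, and suppose in addition that min_{τ ≤ t ≤ T} (t − α_{n-1}(t)) = h > 0. Then there is exactly one continuous function x : [0,T] → ℝ satisfying Σ_{i=1}^{n}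 ∫_{α_{i-1}(t)}^{α_i(t)} K_i(t,s) x(s) ds = f(t) for every t ∈ [0,T]. -/
open intervalIntegral Set MeasureTheory Asymptotics Filter Topology

section VIEaux


lemma VIE_leibniz {T : ℝ} (F F' : ℝ → ℝ → ℝ)
    (hF : Continuous fun p : ℝ × ℝ => F p.1 p.2)
    (hF' : Continuous fun p : ℝ × ℝ => F' p.1 p.2)
    (hd : ∀ t ∈ Icc (0:ℝ) T, ∀ s : ℝ, HasDerivWithinAt (fun u => F u s) (F' t s) (Icc 0 T) t)
    (x : ℝ → ℝ) (hx : Continuous x)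
    (b : ℝ → ℝ) (db t₀ : ℝ) (ht₀ : t₀ ∈ Icc (0:ℝ) T)
    (hb : HasDerivWithinAt b db (Icc 0 T) t₀) :
    HasDerivWithinAt (fun t => ∫ s in (0:ℝ)..b t, F t s * x s)
      (db * (F t₀ (b t₀) * x (b t₀)) + ∫ s in (0:ℝ)..b t₀, F' t₀ s * x s)
      (Icc 0 T) t₀ := by
  have hbc : ContinuousWithinAt b (Icc 0 T) t₀ := hb.continuousWithinAt
  set l := 𝓝[Icc (0:ℝ) T] t₀ with hl
  have hmemt₀ : ∀ᶠ t in l, t ∈ Icc (0:ℝ) T := eventually_mem_nhdsWithin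
  have hint : ∀ (t a c : ℝ), IntervalIntegrable (fun s => F t s * x s) volume a c := by
    intro t a c
    exact ((hF.comp (Continuous.prodMk_right t)).mul hx).intervalIntegrable _ _
  have hint' : ∀ (t a c : ℝ), IntervalIntegrable (fun s => F' t s * x s) volume a c := by
    intro t a c
    exact ((hF'.comp (Continuous.prodMk_right t)).mul hx).intervalIntegrable _ _
  set cst := F t₀ (b t₀) * x (b t₀) with hcst
  set I₀ := ∫ s in (0:ℝ)..b t₀, F' t₀ s * x s with hI₀
  set A := fun t => (∫ s in b t₀..b t, F t s * x s) - (b t - b t₀) * cst with hA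
  set B := fun t => (b t - b t₀ - (t - t₀) * db) * cst with hB
  set C := fun t => ∫ s in (0:ℝ)..b t₀, (F t s - F t₀ s - (t - t₀) * F' t₀ s) * x s with hC
  have ident : ∀ t, (∫ s in (0:ℝ)..b t, F t s * x s) - (∫ s in (0:ℝ)..b t₀, F t₀ s * x s)
      - (t - t₀) * (db * cst + I₀) = A t + B t + C t := by
    intro t
    have h1 : (∫ s in (0:ℝ)..b t, F t s * x s)
        = (∫ s in (0:ℝ)..b t₀, F t s * x s) + ∫ s in b t₀..b t, F t s * x s :=
      (integral_add_adjacent_intervals (hint t 0 (b t₀)) (hint t (b t₀) (b t))).symm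
    have h2 : C t = (∫ s in (0:ℝ)..b t₀, F t s * x s) - (∫ s in (0:ℝ)..b t₀, F t₀ s * x s)
        - (t - t₀) * I₀ := by
      rw [hC]
      have h3 : ∀ s : ℝ, (F t s - F t₀ s - (t - t₀) * F' t₀ s) * x s
          = F t s * x s - F t₀ s * x s - (t - t₀) * (F' t₀ s * x s) := by intro s; ring
      simp only [h3]
      rw [integral_sub ((hint t 0 (b t₀)).sub (hint t₀ 0 (b t₀)))
          ((hint' t₀ 0 (b t₀)).const_mul _),
        integral_sub (hint t 0 (b t₀)) (hint t₀ 0 (b t₀)), intervalIntegral.integral_const_mul]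
    rw [h1, h2]; simp only [hA, hB]; ring
  have hlittleb : (fun t => b t - b t₀ - (t - t₀) * db) =o[l] fun t => t - t₀ := by
    have := hasDerivWithinAt_iff_isLittleO.1 hb
    simpa [smul_eq_mul] using this
  have hBo : (fun t => B t) =o[l] fun t => t - t₀ := by
    have h2 : (fun t => (b t - b t₀ - (t - t₀) * db) * cst) =o[l] fun t => (t - t₀) * 1 :=
      hlittleb.mul_isBigO (isBigO_const_const cst one_ne_zero l)
    simpa [hB, mul_one] using h2
  have hbquant : ∀ᶠ t in l, |b t - b t₀| ≤ (|db| + 1) * |t - t₀| := by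
    filter_upwards [isLittleO_iff.1 hlittleb one_pos] with t ht
    have h4 : |b t - b t₀ - (t - t₀) * db| ≤ |t - t₀| := by
      simpa [Real.norm_eq_abs] using ht
    calc |b t - b t₀| ≤ |b t - b t₀ - (t - t₀) * db| + |(t - t₀) * db| := by
          have := abs_add_le (b t - b t₀ - (t - t₀) * db) ((t - t₀) * db); simpa using this
      _ ≤ |t - t₀| + |t - t₀| * |db| := by rw [abs_mul]; gcongr
      _ = (|db| + 1) * |t - t₀| := by ring
  have hAo : (fun t => A t) =o[l] fun t => t - t₀ := by
    rw [isLittleO_iff]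
    intro c hc
    have hdb1 : (0:ℝ) < |db| + 1 := by positivity
    set c'' := c / (|db| + 1) with hc''
    have hc''pos : 0 < c'' := div_pos hc hdb1
    have hψ : ContinuousAt (fun p : ℝ × ℝ => F p.1 p.2 * x p.2) (t₀, b t₀) :=
      (hF.mul (hx.comp continuous_snd)).continuousAt
    rw [Metric.continuousAt_iff] at hψ
    obtain ⟨δ, hδpos, hδ⟩ := hψ c'' hc''pos
    have hev1 : ∀ᶠ t in l, dist (b t) (b t₀) < δ := by
      have := hbc (Metric.ball_mem_nhds (b t₀) hδpos)
      filter_upwards [this] with t ht using by simpa [Metric.mem_ball] using ht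
    have hev2 : ∀ᶠ t in l, dist t t₀ < δ := by
      apply eventually_nhdsWithin_of_eventually_nhds
      filter_upwards [Metric.ball_mem_nhds t₀ hδpos] with y hy using by
        simpa [Metric.mem_ball] using hy
    filter_upwards [hev1, hev2, hbquant] with t h1 h2 h3
    have hAeq : A t = ∫ s in b t₀..b t, (F t s * x s - cst) := by
      rw [hA, integral_sub (hint t (b t₀) (b t)) intervalIntegrable_const, intervalIntegral.integral_const,
        smul_eq_mul]
    have hbound : ∀ s ∈ uIoc (b t₀) (b t), ‖F t s * x s - cst‖ ≤ c'' := by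
      intro s hs
      have hs' : s ∈ uIcc (b t₀) (b t) := uIoc_subset_uIcc hs
      have hdist : dist (t, s) (t₀, b t₀) < δ := by
        rw [Prod.dist_eq]
        refine max_lt h2 ?_
        have h5 : |s - b t₀| ≤ |b t - b t₀| := abs_sub_left_of_mem_uIcc hs'
        calc dist s (b t₀) = |s - b t₀| := Real.dist_eq _ _
          _ ≤ |b t - b t₀| := h5
          _ = dist (b t) (b t₀) := (Real.dist_eq _ _).symm
          _ < δ := h1
      have := hδ hdist
      rw [Real.dist_eq] at this
      simpa [Real.norm_eq_abs] using this.le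
    have hnorm := intervalIntegral.norm_integral_le_of_norm_le_const hbound
    rw [← hAeq] at hnorm
    calc ‖A t‖ ≤ c'' * |b t - b t₀| := hnorm
      _ ≤ c'' * ((|db| + 1) * |t - t₀|) := by
          apply mul_le_mul_of_nonneg_left _ hc''pos.le
          simpa [abs_sub_comm] using h3
      _ = c * |t - t₀| := by rw [hc'']; field_simp
      _ = c * ‖t - t₀‖ := by rw [Real.norm_eq_abs]
  have hCo : (fun t => C t) =o[l] fun t => t - t₀ := by
    rw [isLittleO_iff]
    intro c hc
    set R := |b t₀| + 1 with hR
    have hRpos : (0:ℝ) < R := by positivity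
    have hsubJ : uIcc (0:ℝ) (b t₀) ⊆ Icc (-R) R := by
      apply uIcc_subset_Icc
      · exact ⟨by rw [hR]; linarith [abs_nonneg (b t₀)],
          by rw [hR]; linarith [abs_nonneg (b t₀)]⟩
      · exact ⟨by rw [hR]; linarith [neg_abs_le (b t₀)],
          by rw [hR]; linarith [le_abs_self (b t₀)]⟩
    obtain ⟨X₀, hX₀⟩ := isCompact_Icc.exists_bound_of_continuousOn
      (f := x) (s := Icc (-R) R) hx.continuousOn
    set X := max X₀ 0 with hX
    have hXnn : 0 ≤ X := le_max_right _ _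
    have hXb : ∀ s ∈ Icc (-R) R, |x s| ≤ X := fun s hs => by
      have := hX₀ s hs; rw [Real.norm_eq_abs] at this; exact this.trans (le_max_left _ _)
    have hden : (0:ℝ) < (X + 1) * (R + 1) := by positivity
    set c' := c / ((X + 1) * (R + 1)) with hc'
    have hc'pos : 0 < c' := div_pos hc hden
    have hQ : IsCompact ((Icc (t₀ - 1) (t₀ + 1)) ×ˢ (Icc (-R) R)) :=
      isCompact_Icc.prod isCompact_Icc
    have hUC := hQ.uniformContinuousOn_of_continuous hF'.continuousOn
    rw [Metric.uniformContinuousOn_iff] at hUC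
    obtain ⟨δ, hδpos, hδ⟩ := hUC c' hc'pos
    have hev2 : ∀ᶠ t in l, dist t t₀ < min δ 1 := by
      apply eventually_nhdsWithin_of_eventually_nhds
      filter_upwards [Metric.ball_mem_nhds t₀ (lt_min hδpos one_pos)] with y hy using by
        simpa [Metric.mem_ball] using hy
    filter_upwards [hev2, hmemt₀] with t htδ htmem
    have htδ1 : dist t t₀ < δ := lt_of_lt_of_le htδ (min_le_left _ _)
    have htδ2 : |t - t₀| < 1 := by
      have := lt_of_lt_of_le htδ (min_le_right _ _); rwa [Real.dist_eq] at this
    -- pointwise bound on the integrand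
    have hFTC : ∀ s ∈ uIcc (0:ℝ) (b t₀),
        |F t s - F t₀ s - (t - t₀) * F' t₀ s| ≤ c' * |t - t₀| := by
      intro s hs
      have hsJ : s ∈ Icc (-R) R := hsubJ hs
      have hsubIcc : uIcc t₀ t ⊆ Icc (0:ℝ) T := uIcc_subset_Icc ht₀ htmem
      have hcFs : Continuous fun u : ℝ => F u s :=
        hF.comp (continuous_id.prodMk continuous_const)
      have hcF's : Continuous fun u : ℝ => F' u s :=
        hF'.comp (continuous_id.prodMk continuous_const)
      have heq : (∫ u in t₀..t, F' u s) = F t s - F t₀ s := by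
        apply integral_eq_sub_of_hasDeriv_right (f := fun u => F u s)
        · exact hcFs.continuousOn
        · intro u hu
          have hu' : u ∈ uIcc t₀ t := by
            rcases le_total t₀ t with hle | hle
            · rw [uIcc_of_le hle]
              rw [min_eq_left hle, max_eq_right hle] at hu
              exact Ioo_subset_Icc_self hu
            · rw [uIcc_of_ge hle]
              rw [min_eq_right hle, max_eq_left hle] at hu
              exact Ioo_subset_Icc_self hu
          have huIcc : u ∈ Icc (0:ℝ) T := hsubIcc hu'
          have hu0 : 0 < u := lt_of_le_of_lt (le_min ht₀.1 htmem.1) hu.1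
          have huT : u < T := lt_of_lt_of_le hu.2 (max_le ht₀.2 htmem.2)
          exact ((hd u huIcc s).hasDerivAt (Icc_mem_nhds hu0 huT)).hasDerivWithinAt
        · exact hcF's.intervalIntegrable _ _
      have heq2 : (t - t₀) * F' t₀ s = ∫ u in t₀..t, F' t₀ s := by
        rw [intervalIntegral.integral_const, smul_eq_mul]
      rw [← heq, heq2, ← integral_sub (hcF's.intervalIntegrable _ _)
        intervalIntegrable_const]
      have hbnd : ∀ u ∈ uIoc t₀ t, ‖F' u s - F' t₀ s‖ ≤ c' := by
        intro u hu
        have hu' : u ∈ uIcc t₀ t := uIoc_subset_uIcc hu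
        have hud : |u - t₀| ≤ |t - t₀| := abs_sub_left_of_mem_uIcc hu'
        have hu1 : u ∈ Icc (t₀ - 1) (t₀ + 1) := by
          constructor <;> [linarith [abs_le.1 (hud.trans htδ2.le) |>.1];
            linarith [abs_le.1 (hud.trans htδ2.le) |>.2]]
        have ht₀1 : t₀ ∈ Icc (t₀ - 1) (t₀ + 1) := by constructor <;> linarith
        have hd12 : dist ((u, s) : ℝ × ℝ) (t₀, s) < δ := by
          rw [Prod.dist_eq]
          apply max_lt _ (by simpa using hδpos)
          rw [Real.dist_eq]
          exact lt_of_le_of_lt hud (by rwa [Real.dist_eq] at htδ1)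
        have := hδ (u, s) (mem_prod.2 ⟨hu1, hsJ⟩) (t₀, s) (mem_prod.2 ⟨ht₀1, hsJ⟩) hd12
        rw [Real.dist_eq] at this
        simpa [Real.norm_eq_abs] using this.le
      have := intervalIntegral.norm_integral_le_of_norm_le_const hbnd
      calc |∫ u in t₀..t, (F' u s - F' t₀ s)| ≤ c' * |t - t₀| := by
            simpa [Real.norm_eq_abs, abs_sub_comm t t₀] using this
        _ ≤ c' * |t - t₀| := le_refl _
    have hCbound : ∀ s ∈ uIoc (0:ℝ) (b t₀),
        ‖(F t s - F t₀ s - (t - t₀) * F' t₀ s) * x s‖ ≤ c' * |t - t₀| * X := by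
      intro s hs
      have hs' : s ∈ uIcc (0:ℝ) (b t₀) := uIoc_subset_uIcc hs
      rw [Real.norm_eq_abs, abs_mul]
      have h1 := hFTC s hs'
      have h2 := hXb s (hsubJ hs')
      calc |F t s - F t₀ s - (t - t₀) * F' t₀ s| * |x s|
          ≤ (c' * |t - t₀|) * X := by
            apply mul_le_mul h1 h2 (abs_nonneg _)
            positivity
        _ = c' * |t - t₀| * X := rfl
    have hnorm := intervalIntegral.norm_integral_le_of_norm_le_const hCbound
    have hfin : ‖C t‖ ≤ c' * |t - t₀| * X * |b t₀ - 0| := by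
      rw [hC]; exact hnorm
    calc ‖C t‖ ≤ c' * |t - t₀| * X * |b t₀ - 0| := hfin
      _ ≤ c' * |t - t₀| * (X + 1) * (R + 1) := by
          rw [sub_zero]
          have h6 : |b t₀| ≤ R + 1 := by rw [hR]; linarith [abs_nonneg (b t₀)]
          have h7 : (X : ℝ) ≤ X + 1 := by linarith
          gcongr <;> positivity
      _ = c * |t - t₀| := by rw [hc']; field_simp
      _ = c * ‖t - t₀‖ := by rw [Real.norm_eq_abs]
  have total := (hAo.add hBo).add hCo
  rw [hasDerivWithinAt_iff_isLittleO]
  refine total.congr_left fun t => ?_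
  rw [smul_eq_mul]
  exact (ident t).symm


lemma VIE_cont (F : ℝ → ℝ → ℝ) (hF : Continuous fun p : ℝ × ℝ => F p.1 p.2)
    (x : ℝ → ℝ) (hx : Continuous x) (b : ℝ → ℝ) (hb : Continuous b) :
    Continuous fun t => ∫ s in (0:ℝ)..b t, F t s * x s := by
  have : Continuous (Function.uncurry fun t s => F t s * x s) := by
    have : Continuous fun p : ℝ × ℝ => F p.1 p.2 * x p.2 := hF.mul (hx.comp continuous_snd)
    exact this
  exact intervalIntegral.continuous_parametric_intervalIntegral_of_continuous this hb

end VIEaux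

/-- **Theorem 1 (global part): global existence and uniqueness** for the weakly regular
Volterra integral equation of the first kind. Under the hypotheses of the local theorem
(`D(0) < 1`), with `τ ∈ (0,T]` as given by the local theorem, if moreover
`min_{τ ≤ t ≤ T} (t - α_{n-1}(t)) = h > 0`, then the equation
`∑_{i=1}^{n} ∫_{α_{i-1}(t)}^{α_i(t)} K_i(t,s) x(s) ds = f(t)` has exactly one
continuous solution on `[0,T]`. -/
theorem global_existence_uniqueness_weakly_regular_VIE
    (n : ℕ) (hn : 1 ≤ n) (T : ℝ) (hT : 0 < T)
    (α α' : ℕ → ℝ → ℝ) (K K' : ℕ → ℝ → ℝ → ℝ) (f f' : ℝ → ℝ)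
    (hα0 : ∀ t, α 0 t = 0)
    (hαn : ∀ t, α n t = t)
    (hαderiv : ∀ i, i ≤ n → ∀ t ∈ Icc (0:ℝ) T, HasDerivAt (α i) (α' i t) t)
    (hα'cont : ∀ i, i ≤ n → ContinuousOn (α' i) (Icc 0 T))
    (hαinit : ∀ i, i ≤ n → α i 0 = 0)
    (hαchain : ∀ t ∈ Ioc (0:ℝ) T, ∀ i, 1 ≤ i → i ≤ n → α (i - 1) t < α i t)
    (hKcont : ∀ i, 1 ≤ i → i ≤ n →
      ContinuousOn (fun p : ℝ × ℝ => K i p.1 p.2) (Icc 0 T ×ˢ Icc 0 T))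
    (hKderiv : ∀ i, 1 ≤ i → i ≤ n → ∀ s ∈ Icc (0:ℝ) T, ∀ t ∈ Icc (0:ℝ) T,
      HasDerivAt (fun u => K i u s) (K' i t s) t)
    (hK'cont : ∀ i, 1 ≤ i → i ≤ n →
      ContinuousOn (fun p : ℝ × ℝ => K' i p.1 p.2) (Icc 0 T ×ˢ Icc 0 T))
    (hfderiv : ∀ t ∈ Icc (0:ℝ) T, HasDerivAt f (f' t) t)
    (hf'cont : ContinuousOn f' (Icc 0 T))
    (hf0 : f 0 = 0)
    (hKn : ∀ t ∈ Icc (0:ℝ) T, K n t t ≠ 0)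
    -- `D(0) < 1`
    (hD : ∑ i ∈ Finset.Icc 1 (n - 1),
        |α' i 0 * (K n 0 0)⁻¹| * |K i 0 (α i 0) - K (i + 1) 0 (α i 0)| < 1)
    -- `τ` is as in the local existence theorem: on `[0,τ]` there is exactly one
    -- continuous solution
    (τ : ℝ) (hτ : τ ∈ Ioc (0:ℝ) T)
    (hτloc : ∃ x : ℝ → ℝ,
      (ContinuousOn x (Icc 0 τ) ∧
        ∀ t ∈ Icc (0:ℝ) τ,
          ∑ i ∈ Finset.Icc 1 n, ∫ s in α (i - 1) t..α i t, K i t s * x s = f t) ∧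
      ∀ y : ℝ → ℝ,
        (ContinuousOn y (Icc 0 τ) ∧
          ∀ t ∈ Icc (0:ℝ) τ,
            ∑ i ∈ Finset.Icc 1 n, ∫ s in α (i - 1) t..α i t, K i t s * y s = f t) →
        ∀ t ∈ Icc (0:ℝ) τ, y t = x t)
    -- `min_{τ ≤ t ≤ T} (t - α_{n-1}(t)) = h > 0`
    (h : ℝ) (hh : 0 < h)
    (hmin : IsLeast ((fun t => t - α (n - 1) t) '' Icc τ T) h) :
    ∃ x : ℝ → ℝ,
      (ContinuousOn x (Icc 0 T) ∧
        ∀ t ∈ Icc (0:ℝ) T,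
          ∑ i ∈ Finset.Icc 1 n, ∫ s in α (i - 1) t..α i t, K i t s * x s = f t) ∧
      ∀ y : ℝ → ℝ,
        (ContinuousOn y (Icc 0 T) ∧
          ∀ t ∈ Icc (0:ℝ) T,
            ∑ i ∈ Finset.Icc 1 n, ∫ s in α (i - 1) t..α i t, K i t s * y s = f t) →
        ∀ t ∈ Icc (0:ℝ) T, y t = x t := by
  clear hD hf0
  obtain ⟨hτ0, hτT⟩ := hτ
  have hT0 : (0:ℝ) ≤ T := hT.le
  -- the clamping projection onto [0, T]
  set π : ℝ → ℝ := fun u => max 0 (min u T) with hπdef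
  have hπcont : Continuous π := continuous_const.max (continuous_id.min continuous_const)
  have hπmem : ∀ u, π u ∈ Icc (0:ℝ) T := fun u =>
    ⟨le_max_left _ _, max_le hT0 (min_le_right _ _)⟩
  have hπid : ∀ u ∈ Icc (0:ℝ) T, π u = u := fun u hu => by
    simp only [hπdef]; rw [min_eq_left hu.2, max_eq_right hu.1]
  -- clamped kernels and curves
  set Kc : ℕ → ℝ → ℝ → ℝ := fun i t s => K i (π t) (π s) with hKcdef
  set Kc' : ℕ → ℝ → ℝ → ℝ := fun i t s => K' i (π t) (π s) with hKc'def
  set b : ℕ → ℝ → ℝ := fun i t => α i (π t) with hbdef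
  have hKccont : ∀ i, 1 ≤ i → i ≤ n → Continuous fun p : ℝ × ℝ => Kc i p.1 p.2 := by
    intro i h1 h2
    exact (hKcont i h1 h2).comp_continuous
      ((hπcont.comp continuous_fst).prodMk (hπcont.comp continuous_snd))
      (fun p => ⟨hπmem _, hπmem _⟩)
  have hKc'cont : ∀ i, 1 ≤ i → i ≤ n → Continuous fun p : ℝ × ℝ => Kc' i p.1 p.2 := by
    intro i h1 h2
    exact (hK'cont i h1 h2).comp_continuous
      ((hπcont.comp continuous_fst).prodMk (hπcont.comp continuous_snd))
      (fun p => ⟨hπmem _, hπmem _⟩)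
  have hKcderiv : ∀ i, 1 ≤ i → i ≤ n → ∀ t ∈ Icc (0:ℝ) T, ∀ s : ℝ,
      HasDerivWithinAt (fun u => Kc i u s) (Kc' i t s) (Icc 0 T) t := by
    intro i h1 h2 t ht s
    have base : HasDerivWithinAt (fun u => K i u (π s)) (K' i t (π s)) (Icc 0 T) t :=
      (hKderiv i h1 h2 (π s) (hπmem s) t ht).hasDerivWithinAt
    have h3 : HasDerivWithinAt (fun u => Kc i u s) (K' i t (π s)) (Icc 0 T) t :=
      base.congr (fun u hu => by simp only [hKcdef]; rw [hπid u hu])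
        (by simp only [hKcdef]; rw [hπid t ht])
    simpa only [hKc'def, hπid t ht] using h3
  have hαcont : ∀ i, i ≤ n → ContinuousOn (α i) (Icc (0:ℝ) T) := fun i hi =>
    fun t ht => ((hαderiv i hi t ht).continuousAt).continuousWithinAt
  have hbcont : ∀ i, i ≤ n → Continuous (b i) := fun i hi =>
    (hαcont i hi).comp_continuous hπcont hπmem
  have hbderiv : ∀ i, i ≤ n → ∀ t ∈ Icc (0:ℝ) T,
      HasDerivWithinAt (b i) (α' i t) (Icc 0 T) t := by
    intro i hi t ht
    refine HasDerivWithinAt.congr ((hαderiv i hi t ht).hasDerivWithinAt)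
      (fun u hu => by simp only [hbdef]; rw [hπid u hu])
      (by simp only [hbdef]; rw [hπid t ht])
  have hbid : ∀ i : ℕ, ∀ t ∈ Icc (0:ℝ) T, b i t = α i t := fun i t ht => by
    simp only [hbdef, hπid t ht]
  -- monotonicity of the curves
  have hmono : ∀ t ∈ Icc (0:ℝ) T, ∀ i j : ℕ, i ≤ j → j ≤ n → α i t ≤ α j t := by
    intro t ht i j hij hjn
    rcases eq_or_lt_of_le ht.1 with h0 | h0
    · rw [← h0, hαinit i (hij.trans hjn), hαinit j hjn]
    · have key : ∀ j : ℕ, j ≤ n → ∀ i : ℕ, i ≤ j → α i t ≤ α j t := by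
        intro j
        induction j with
        | zero => intro _ i hi; obtain rfl : i = 0 := Nat.le_zero.mp hi; exact le_rfl
        | succ k ih =>
          intro hkn i hi
          rcases Nat.lt_or_ge i (k+1) with hlt | hge
          · have h1 : α i t ≤ α k t := ih (Nat.le_of_succ_le hkn) i (Nat.lt_succ_iff.mp hlt)
            have h2 : α k t < α (k+1) t := by
              have := hαchain t ⟨h0, ht.2⟩ (k+1) (Nat.succ_le_succ (Nat.zero_le k)) hkn
              simpa using this
            linarith
          · obtain rfl : i = k+1 := le_antisymm hi hge
            exact le_rfl
      exact key j hjn i hij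
  have hα0t : ∀ t ∈ Icc (0:ℝ) T, 0 ≤ α 0 t := fun t _ => le_of_eq (hα0 t).symm
  have hαmem : ∀ i, i ≤ n → ∀ t ∈ Icc (0:ℝ) T, α i t ∈ Icc (0:ℝ) t := by
    intro i hi t ht
    constructor
    · have := hmono t ht 0 i (Nat.zero_le _) hi; rw [hα0 t] at this; exact this
    · have := hmono t ht i n hi le_rfl; rw [hαn t] at this; exact this
  -- endpoint derivative values
  have hα'0 : ∀ t ∈ Icc (0:ℝ) T, α' 0 t = 0 := by
    intro t ht
    have h1 := hαderiv 0 (Nat.zero_le n) t ht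
    have h2 : α 0 = fun _ : ℝ => (0:ℝ) := funext hα0
    rw [h2] at h1
    exact h1.unique (hasDerivAt_const t 0)
  have hα'n : ∀ t ∈ Icc (0:ℝ) T, α' n t = 1 := by
    intro t ht
    have h1 := hαderiv n le_rfl t ht
    have h2 : α n = fun u : ℝ => u := funext hαn
    rw [h2] at h1
    exact h1.unique (hasDerivAt_id t)
  -- the local solution, extended
  obtain ⟨x₀, ⟨hx₀c, hx₀eq⟩, hx₀uniq⟩ := hτloc
  set πτ : ℝ → ℝ := fun u => max 0 (min u τ) with hπτdef
  have hπτcont : Continuous πτ := continuous_const.max (continuous_id.min continuous_const)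
  have hπτmem : ∀ u, πτ u ∈ Icc (0:ℝ) τ := fun u =>
    ⟨le_max_left _ _, max_le hτ0.le (min_le_right _ _)⟩
  have hπτid : ∀ u ∈ Icc (0:ℝ) τ, πτ u = u := fun u hu => by
    simp only [hπτdef]; rw [min_eq_left hu.2, max_eq_right hu.1]
  set x₀e : ℝ → ℝ := fun u => x₀ (πτ u) with hx₀edef
  have hx₀econt : Continuous x₀e := hx₀c.comp_continuous hπτcont hπτmem
  have hx₀eid : ∀ u ∈ Icc (0:ℝ) τ, x₀e u = x₀ u := fun u hu => by
    simp only [hx₀edef, hπτid u hu]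
  -- nonvanishing of the clamped kernel on the diagonal
  have hKnne : ∀ t : ℝ, Kc n t t ≠ 0 := fun t => hKn (π t) (hπmem t)
  -- the first-kind operator and its derivative
  set G : (ℝ → ℝ) → ℝ → ℝ := fun x t =>
    ∑ i ∈ Finset.Icc 1 n, ∫ s in b (i-1) t..b i t, Kc i t s * x s with hGdef
  set g : (ℝ → ℝ) → ℝ → ℝ := fun x t =>
    ∑ i ∈ Finset.Icc 1 n, (α' i t * (Kc i t (b i t) * x (b i t))
      - α' (i-1) t * (Kc i t (b (i-1) t) * x (b (i-1) t))
      + ∫ s in b (i-1) t..b i t, Kc' i t s * x s) with hgdef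
  have hKcint : ∀ i, 1 ≤ i → i ≤ n → ∀ (x : ℝ → ℝ), Continuous x → ∀ (t u v : ℝ),
      IntervalIntegrable (fun s => Kc i t s * x s) volume u v := by
    intro i h1 h2 x hx t u v
    exact (((hKccont i h1 h2).comp (Continuous.prodMk_right t)).mul hx).intervalIntegrable _ _
  have hKc'int : ∀ i, 1 ≤ i → i ≤ n → ∀ (x : ℝ → ℝ), Continuous x → ∀ (t u v : ℝ),
      IntervalIntegrable (fun s => Kc' i t s * x s) volume u v := by
    intro i h1 h2 x hx t u v
    exact (((hKc'cont i h1 h2).comp (Continuous.prodMk_right t)).mul hx).intervalIntegrable _ _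
  have hGderiv : ∀ (x : ℝ → ℝ), Continuous x → ∀ t ∈ Icc (0:ℝ) T,
      HasDerivWithinAt (G x) (g x t) (Icc 0 T) t := by
    intro x hx t ht
    simp only [hGdef, hgdef]
    apply HasDerivWithinAt.fun_sum
    intro i hi
    obtain ⟨h1i, hin⟩ := Finset.mem_Icc.mp hi
    have him : i - 1 ≤ n := le_trans (Nat.sub_le i 1) hin
    have hbi := hbderiv i hin t ht
    have hbim := hbderiv (i-1) him t ht
    have hup := VIE_leibniz (T := T) (Kc i) (Kc' i) (hKccont i h1i hin) (hKc'cont i h1i hin)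
      (fun t' ht' s => hKcderiv i h1i hin t' ht' s) x hx (b i) (α' i t) t ht hbi
    have hlo := VIE_leibniz (T := T) (Kc i) (Kc' i) (hKccont i h1i hin) (hKc'cont i h1i hin)
      (fun t' ht' s => hKcderiv i h1i hin t' ht' s) x hx (b (i-1)) (α' (i-1) t) t ht hbim
    have hsub := hup.sub hlo
    have hfunEq : ∀ t' : ℝ, (∫ s in b (i-1) t'..b i t', Kc i t' s * x s)
        = (∫ s in (0:ℝ)..b i t', Kc i t' s * x s)
          - ∫ s in (0:ℝ)..b (i-1) t', Kc i t' s * x s :=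
      fun t' => (integral_interval_sub_left (hKcint i h1i hin x hx t' 0 (b i t'))
        (hKcint i h1i hin x hx t' 0 (b (i-1) t'))).symm
    have hvalEq : α' i t * (Kc i t (b i t) * x (b i t))
        - α' (i-1) t * (Kc i t (b (i-1) t) * x (b (i-1) t))
        + (∫ s in b (i-1) t..b i t, Kc' i t s * x s)
        = (α' i t * (Kc i t (b i t) * x (b i t))
            + ∫ s in (0:ℝ)..b i t, Kc' i t s * x s)
          - (α' (i-1) t * (Kc i t (b (i-1) t) * x (b (i-1) t))
            + ∫ s in (0:ℝ)..b (i-1) t, Kc' i t s * x s) := by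
      rw [← integral_interval_sub_left (hKc'int i h1i hin x hx t 0 (b i t))
        (hKc'int i h1i hin x hx t 0 (b (i-1) t))]
      ring
    rw [hvalEq]
    exact hsub.congr (fun u _ => hfunEq u) (hfunEq t)
  have hGcont : ∀ (x : ℝ → ℝ), Continuous x → Continuous (G x) := by
    intro x hx
    simp only [hGdef]
    apply continuous_finset_sum
    intro i hi
    obtain ⟨h1i, hin⟩ := Finset.mem_Icc.mp hi
    have him : i - 1 ≤ n := le_trans (Nat.sub_le i 1) hin
    have h1 := VIE_cont (Kc i) (hKccont i h1i hin) x hx (b i) (hbcont i hin)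
    have h2 := VIE_cont (Kc i) (hKccont i h1i hin) x hx (b (i-1)) (hbcont (i-1) him)
    refine Continuous.congr (h1.sub h2) fun t => ?_
    exact integral_interval_sub_left (hKcint i h1i hin x hx t 0 (b i t))
      (hKcint i h1i hin x hx t 0 (b (i-1) t))
  -- coefficients of the second-kind equation
  set c : ℕ → ℝ → ℝ := fun i t => α' i (π t) * (Kc i t (b i t) - Kc (i+1) t (b i t)) with hcdef
  -- algebraic regrouping of the derivative
  have hgc : ∀ (x : ℝ → ℝ) (t : ℝ), t ∈ Icc (0:ℝ) T → g x t
      = Kc n t t * x t + (∑ i ∈ Finset.Icc 1 (n-1), c i t * x (b i t))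
        + ∑ i ∈ Finset.Icc 1 n, ∫ s in b (i-1) t..b i t, Kc' i t s * x s := by
    intro x t ht
    obtain ⟨m, rfl⟩ : ∃ m, n = m + 1 := ⟨n - 1, (Nat.succ_pred_eq_of_pos hn).symm⟩
    simp only [Nat.add_sub_cancel]
    simp only [hgdef]
    set A : ℕ → ℝ := fun i => α' i t * (Kc i t (b i t) * x (b i t)) with hAdef
    set B : ℕ → ℝ := fun i => α' (i-1) t * (Kc i t (b (i-1) t) * x (b (i-1) t)) with hBdef
    set J : ℕ → ℝ := fun i => ∫ s in b (i-1) t..b i t, Kc' i t s * x s with hJdef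
    have hsplit : ∑ i ∈ Finset.Icc 1 (m+1), (A i - B i + J i)
        = ((∑ i ∈ Finset.Icc 1 (m+1), A i) - ∑ i ∈ Finset.Icc 1 (m+1), B i)
          + ∑ i ∈ Finset.Icc 1 (m+1), J i := by
      rw [Finset.sum_add_distrib, Finset.sum_sub_distrib]
    set β : ℕ → ℝ := fun j => α' j t * (Kc (j+1) t (b j t) * x (b j t)) with hβdef
    have hBβ : ∀ i ∈ Finset.Icc 1 (m+1), B i = β (i-1) := by
      intro i hi
      obtain ⟨h1i, _⟩ := Finset.mem_Icc.mp hi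
      have hadd : i - 1 + 1 = i := Nat.succ_pred_eq_of_pos h1i
      simp only [hBdef, hβdef, hadd]
    have hshift : ∑ i ∈ Finset.Icc 1 (m+1), B i = ∑ j ∈ Finset.Icc 0 m, β j := by
      rw [Finset.sum_congr rfl hBβ]
      rw [show Finset.Icc 1 (m+1) = Finset.Icc (0+1) (m+1) from rfl,
        ← Finset.map_add_right_Icc 0 m 1, Finset.sum_map]
      apply Finset.sum_congr rfl
      intro j _
      simp [addRightEmbedding]
    have hins : Finset.Icc 0 m = insert 0 (Finset.Icc 1 m) := by
      ext z; simp only [Finset.mem_Icc, Finset.mem_insert]; omega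
    have hβ0 : β 0 = 0 := by
      simp only [hβdef]
      rw [hα'0 t ht, zero_mul]
    have hsumB : ∑ i ∈ Finset.Icc 1 (m+1), B i = ∑ j ∈ Finset.Icc 1 m, β j := by
      rw [hshift, hins, Finset.sum_insert (by simp), hβ0, zero_add]
    have hsumA : ∑ i ∈ Finset.Icc 1 (m+1), A i
        = (∑ i ∈ Finset.Icc 1 m, A i) + A (m+1) :=
      Finset.sum_Icc_succ_top (Nat.one_le_iff_ne_zero.mpr (Nat.succ_ne_zero m)) A
    have hAtop : A (m+1) = Kc (m+1) t t * x t := by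
      simp only [hAdef]
      rw [hα'n t ht, one_mul]
      have hbt : b (m+1) t = t := by
        simp only [hbdef]
        rw [hαn (π t), hπid t ht]
      rw [hbt]
    have hterm : ∀ i ∈ Finset.Icc 1 m, A i - β i = c i t * x (b i t) := by
      intro i hi
      simp only [hAdef, hβdef, hcdef]
      rw [hπid t ht]
      ring
    calc ∑ i ∈ Finset.Icc 1 (m+1), (A i - B i + J i)
        = ((∑ i ∈ Finset.Icc 1 (m+1), A i) - ∑ i ∈ Finset.Icc 1 (m+1), B i)
          + ∑ i ∈ Finset.Icc 1 (m+1), J i := hsplit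
      _ = ((∑ i ∈ Finset.Icc 1 m, A i) + A (m+1) - ∑ j ∈ Finset.Icc 1 m, β j)
          + ∑ i ∈ Finset.Icc 1 (m+1), J i := by rw [hsumA, hsumB]
      _ = (A (m+1) + ∑ i ∈ Finset.Icc 1 m, (A i - β i))
          + ∑ i ∈ Finset.Icc 1 (m+1), J i := by rw [Finset.sum_sub_distrib]; ring
      _ = (Kc (m+1) t t * x t + ∑ i ∈ Finset.Icc 1 m, c i t * x (b i t))
          + ∑ i ∈ Finset.Icc 1 (m+1), J i := by
            rw [hAtop, Finset.sum_congr rfl hterm]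
      _ = Kc (m+1) t t * x t + (∑ i ∈ Finset.Icc 1 m, c i t * x (b i t))
          + ∑ i ∈ Finset.Icc 1 (m+1), J i := by ring
  -- the second-kind operator
  set Ξ : (ℝ → ℝ) → ℝ → ℝ := fun x t => (Kc n t t)⁻¹ * (f' (π t)
      - (∑ i ∈ Finset.Icc 1 (n-1), c i t * x (b i t))
      - ∑ i ∈ Finset.Icc 1 n, ∫ s in b (i-1) t..b i t, Kc' i t s * x s) with hΞdef
  have hequiv : ∀ (x : ℝ → ℝ) (t : ℝ), t ∈ Icc (0:ℝ) T →
      (g x t = f' t ↔ x t = Ξ x t) := by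
    intro x t ht
    rw [hgc x t ht]
    have hne := hKnne t
    simp only [hΞdef]
    rw [hπid t ht, inv_mul_eq_div, eq_div_iff hne]
    constructor <;> intro h' <;> nlinarith [mul_comm (x t) (Kc n t t)]
  have hΞcont : ∀ (x : ℝ → ℝ), Continuous x → Continuous (Ξ x) := by
    intro x hx
    simp only [hΞdef]
    have hKd : Continuous fun t : ℝ => Kc n t t :=
      (hKccont n hn le_rfl).comp (continuous_id.prodMk continuous_id)
    refine Continuous.mul (hKd.inv₀ hKnne) (Continuous.sub (Continuous.sub ?_ ?_) ?_)
    · exact hf'cont.comp_continuous hπcont hπmem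
    · apply continuous_finset_sum
      intro i hi
      obtain ⟨h1i, him⟩ := Finset.mem_Icc.mp hi
      have hin : i ≤ n := le_trans him (Nat.sub_le n 1)
      have hi1n : i + 1 ≤ n := by omega
      have hc : Continuous fun t => c i t := by
        simp only [hcdef]
        exact (((hα'cont i hin).comp_continuous hπcont hπmem).mul
          ((((hKccont i h1i hin).comp (continuous_id.prodMk (hbcont i hin)))).sub
            ((hKccont (i+1) (Nat.le_add_left 1 i) hi1n).comp
              (continuous_id.prodMk (hbcont i hin)))))
      exact hc.mul (hx.comp (hbcont i hin))
    · apply continuous_finset_sum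
      intro i hi
      obtain ⟨h1i, hin⟩ := Finset.mem_Icc.mp hi
      have him : i - 1 ≤ n := le_trans (Nat.sub_le i 1) hin
      have h1 := VIE_cont (Kc' i) (hKc'cont i h1i hin) x hx (b i) (hbcont i hin)
      have h2 := VIE_cont (Kc' i) (hKc'cont i h1i hin) x hx (b (i-1)) (hbcont (i-1) him)
      refine Continuous.congr (h1.sub h2) fun t => ?_
      exact integral_interval_sub_left (hKc'int i h1i hin x hx t 0 (b i t))
        (hKc'int i h1i hin x hx t 0 (b (i-1) t))
  have hΞcongr : ∀ (x z : ℝ → ℝ) (t : ℝ), t ∈ Icc (0:ℝ) T →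
      (∀ s ∈ Icc (0:ℝ) t, x s = z s) → Ξ x t = Ξ z t := by
    intro x z t ht hxz
    have hbmem : ∀ i : ℕ, i ≤ n → b i t ∈ Icc (0:ℝ) t := by
      intro i hi
      rw [hbid i t ht]
      exact hαmem i hi t ht
    have e1 : ∑ i ∈ Finset.Icc 1 (n-1), c i t * x (b i t)
        = ∑ i ∈ Finset.Icc 1 (n-1), c i t * z (b i t) := by
      apply Finset.sum_congr rfl
      intro i hi
      obtain ⟨h1i, him⟩ := Finset.mem_Icc.mp hi
      have hin : i ≤ n := le_trans him (Nat.sub_le n 1)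
      rw [hxz _ (hbmem i hin)]
    have e2 : ∑ i ∈ Finset.Icc 1 n, (∫ s in b (i-1) t..b i t, Kc' i t s * x s)
        = ∑ i ∈ Finset.Icc 1 n, ∫ s in b (i-1) t..b i t, Kc' i t s * z s := by
      apply Finset.sum_congr rfl
      intro i hi
      obtain ⟨h1i, hin⟩ := Finset.mem_Icc.mp hi
      have him : i - 1 ≤ n := le_trans (Nat.sub_le i 1) hin
      apply intervalIntegral.integral_congr
      intro s hs
      have hs' : s ∈ Icc (0:ℝ) t := uIcc_subset_Icc (hbmem (i-1) him) (hbmem i hin) hs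
      show Kc' i t s * x s = Kc' i t s * z s
      rw [hxz s hs']
    simp only [hΞdef]
    rw [e1, e2]
  -- x₀e satisfies the first-kind equation on [0, τ]
  have hGx₀ : ∀ t ∈ Icc (0:ℝ) τ, G x₀e t = f t := by
    intro t ht
    have ht' : t ∈ Icc (0:ℝ) T := ⟨ht.1, ht.2.trans hτT⟩
    rw [← hx₀eq t ht]
    simp only [hGdef]
    apply Finset.sum_congr rfl
    intro i hi
    obtain ⟨h1i, hin⟩ := Finset.mem_Icc.mp hi
    have him : i - 1 ≤ n := le_trans (Nat.sub_le i 1) hin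
    rw [hbid i t ht', hbid (i-1) t ht']
    apply intervalIntegral.integral_congr
    intro s hs
    have hs' : s ∈ Icc (0:ℝ) t :=
      uIcc_subset_Icc (hαmem (i-1) him t ht') (hαmem i hin t ht') hs
    have hsT : s ∈ Icc (0:ℝ) T := ⟨hs'.1, hs'.2.trans ht'.2⟩
    have hsτ : s ∈ Icc (0:ℝ) τ := ⟨hs'.1, hs'.2.trans ht.2⟩
    show Kc i t s * x₀e s = K i t s * x₀ s
    simp only [hKcdef]
    rw [hπid t ht', hπid s hsT, hx₀eid s hsτ]
  -- hence the second-kind equation at τ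
  have hmatch : x₀e τ = Ξ x₀e τ := by
    have hτmem : τ ∈ Icc (0:ℝ) T := ⟨hτ0.le, hτT⟩
    have hτIcc : τ ∈ Icc (0:ℝ) τ := ⟨hτ0.le, le_rfl⟩
    have h1 : HasDerivWithinAt (G x₀e) (g x₀e τ) (Icc 0 τ) τ :=
      (hGderiv x₀e hx₀econt τ hτmem).mono (Icc_subset_Icc_right hτT)
    have h2 : HasDerivWithinAt f (g x₀e τ) (Icc 0 τ) τ :=
      h1.congr (fun y hy => (hGx₀ y hy).symm) ((hGx₀ τ hτIcc).symm)
    have h3 : HasDerivWithinAt f (f' τ) (Icc 0 τ) τ := (hfderiv τ hτmem).hasDerivWithinAt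
    have hud : UniqueDiffWithinAt ℝ (Icc (0:ℝ) τ) τ := (uniqueDiffOn_Icc hτ0) τ hτIcc
    have h4 : g x₀e τ = f' τ := by rw [← h2.derivWithin hud, ← h3.derivWithin hud]
    exact (hequiv x₀e τ hτmem).mp h4
  -- bounds
  obtain ⟨M, hM0, hMb⟩ : ∃ M : ℝ, 0 ≤ M ∧ ∀ i ∈ Finset.Icc 1 n, ∀ t s : ℝ,
      |Kc' i t s| ≤ M := by
    have hone : ∀ i : ℕ, ∃ Mi : ℝ, 0 ≤ Mi ∧ (1 ≤ i → i ≤ n → ∀ t s : ℝ, |Kc' i t s| ≤ Mi) := by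
      intro i
      by_cases hi : 1 ≤ i ∧ i ≤ n
      · obtain ⟨M₀, hM₀⟩ := (isCompact_Icc.prod isCompact_Icc).exists_bound_of_continuousOn
          (hK'cont i hi.1 hi.2)
        refine ⟨max M₀ 0, le_max_right _ _, fun _ _ t s => ?_⟩
        have h5 := hM₀ (π t, π s) (mem_prod.2 ⟨hπmem t, hπmem s⟩)
        rw [Real.norm_eq_abs] at h5
        calc |Kc' i t s| = |K' i (π t) (π s)| := by rw [hKc'def]
          _ ≤ M₀ := h5
          _ ≤ max M₀ 0 := le_max_left _ _
      · exact ⟨0, le_rfl, fun h1 h2 => absurd ⟨h1, h2⟩ hi⟩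
    choose Mi hMi0 hMib using hone
    refine ⟨∑ i ∈ Finset.Icc 1 n, Mi i, Finset.sum_nonneg (fun i _ => hMi0 i), ?_⟩
    intro i hi t s
    obtain ⟨h1i, hin⟩ := Finset.mem_Icc.mp hi
    exact le_trans (hMib i h1i hin t s)
      (Finset.single_le_sum (f := Mi) (fun j _ => hMi0 j) hi)
  obtain ⟨Cb, hCb0, hCbb⟩ : ∃ Cb : ℝ, 0 ≤ Cb ∧ ∀ i ∈ Finset.Icc 1 (n-1), ∀ t : ℝ,
      |c i t| ≤ Cb := by
    have hone : ∀ i : ℕ, ∃ Ci : ℝ, 0 ≤ Ci ∧ (1 ≤ i → i ≤ n - 1 → ∀ t : ℝ, |c i t| ≤ Ci) := by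
      intro i
      by_cases hi : 1 ≤ i ∧ i ≤ n - 1
      · have hin : i ≤ n := le_trans hi.2 (Nat.sub_le n 1)
        have hi1 : i + 1 ≤ n := by
          have := hi.2; omega
        obtain ⟨A₀, hA₀⟩ := isCompact_Icc.exists_bound_of_continuousOn (hα'cont i hin)
        obtain ⟨K₀, hK₀⟩ := (isCompact_Icc.prod isCompact_Icc).exists_bound_of_continuousOn
          (hKcont i hi.1 hin)
        obtain ⟨K₁, hK₁⟩ := (isCompact_Icc.prod isCompact_Icc).exists_bound_of_continuousOn
          (hKcont (i+1) (Nat.le_add_left 1 i) hi1)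
        refine ⟨max A₀ 0 * (max K₀ 0 + max K₁ 0), by positivity, fun _ _ t => ?_⟩
        have ht1 : |α' i (π t)| ≤ max A₀ 0 := by
          have := hA₀ (π t) (hπmem t)
          rw [Real.norm_eq_abs] at this
          exact this.trans (le_max_left _ _)
        have ht2 : |Kc i t (b i t)| ≤ max K₀ 0 := by
          have := hK₀ (π t, π (b i t)) (mem_prod.2 ⟨hπmem t, hπmem (b i t)⟩)
          rw [Real.norm_eq_abs] at this
          calc |Kc i t (b i t)| = |K i (π t) (π (b i t))| := by rw [hKcdef]
            _ ≤ K₀ := this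
            _ ≤ max K₀ 0 := le_max_left _ _
        have ht3 : |Kc (i+1) t (b i t)| ≤ max K₁ 0 := by
          have := hK₁ (π t, π (b i t)) (mem_prod.2 ⟨hπmem t, hπmem (b i t)⟩)
          rw [Real.norm_eq_abs] at this
          calc |Kc (i+1) t (b i t)| = |K (i+1) (π t) (π (b i t))| := by rw [hKcdef]
            _ ≤ K₁ := this
            _ ≤ max K₁ 0 := le_max_left _ _
        calc |c i t| = |α' i (π t)| * |Kc i t (b i t) - Kc (i+1) t (b i t)| := by
              rw [hcdef]; exact abs_mul _ _
          _ ≤ max A₀ 0 * (max K₀ 0 + max K₁ 0) := by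
              apply mul_le_mul ht1 _ (abs_nonneg _) (le_max_right _ _)
              calc |Kc i t (b i t) - Kc (i+1) t (b i t)|
                  ≤ |Kc i t (b i t)| + |Kc (i+1) t (b i t)| := abs_sub _ _
                _ ≤ max K₀ 0 + max K₁ 0 := add_le_add ht2 ht3
      · exact ⟨0, le_rfl, fun h1 h2 => absurd ⟨h1, h2⟩ hi⟩
    choose Ci hCi0 hCib using hone
    refine ⟨∑ i ∈ Finset.Icc 1 (n-1), Ci i, Finset.sum_nonneg (fun i _ => hCi0 i), ?_⟩
    intro i hi t
    obtain ⟨h1i, hin⟩ := Finset.mem_Icc.mp hi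
    exact le_trans (hCib i h1i hin t)
      (Finset.single_le_sum (f := Ci) (fun j _ => hCi0 j) hi)
  obtain ⟨Bb, hBb0, hBbb⟩ : ∃ Bb : ℝ, 0 ≤ Bb ∧ ∀ t : ℝ, |(Kc n t t)⁻¹| ≤ Bb := by
    have hcont : ContinuousOn (fun u : ℝ => (K n u u)⁻¹) (Icc 0 T) := by
      apply ContinuousOn.inv₀ _ (fun u hu => hKn u hu)
      exact (hKcont n hn le_rfl).comp
        ((continuous_id.prodMk continuous_id).continuousOn) (fun u hu => ⟨hu, hu⟩)
    obtain ⟨B₀, hB₀⟩ := isCompact_Icc.exists_bound_of_continuousOn hcont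
    refine ⟨max B₀ 0, le_max_right _ _, fun t => ?_⟩
    have := hB₀ (π t) (hπmem t)
    rw [Real.norm_eq_abs] at this
    calc |(Kc n t t)⁻¹| = |(K n (π t) (π t))⁻¹| := by rw [hKcdef]
      _ ≤ B₀ := this
      _ ≤ max B₀ 0 := le_max_left _ _
  -- choice of the weight
  obtain ⟨L, hL0, hq1⟩ : ∃ L : ℝ, 0 < L ∧
      Bb * ((n:ℝ) * Cb * Real.exp (-(L * h)) + (n:ℝ) * M / L) < 1 := by
    have h1 : Tendsto (fun L : ℝ => Bb * ((n:ℝ) * Cb * Real.exp (-(L * h)) + (n:ℝ) * M / L))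
        atTop (𝓝 (Bb * ((n:ℝ) * Cb * 0 + 0))) := by
      apply Tendsto.const_mul
      apply Tendsto.add
      · apply Tendsto.const_mul
        have h2 : Tendsto (fun L : ℝ => -(L * h)) atTop atBot :=
          tendsto_neg_atTop_atBot.comp (tendsto_id.atTop_mul_const hh)
        exact Real.tendsto_exp_atBot.comp h2
      · exact Tendsto.div_atTop tendsto_const_nhds tendsto_id
    have h2 : Bb * ((n:ℝ) * Cb * 0 + 0) = 0 := by ring
    rw [h2] at h1
    have h3 := h1.eventually_lt_const one_pos
    obtain ⟨L, hL⟩ := (h3.and (eventually_gt_atTop 0)).exists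
    exact ⟨L, hL.2, hL.1⟩
  set q : ℝ := Bb * ((n:ℝ) * Cb * Real.exp (-(L * h)) + (n:ℝ) * M / L) with hqdef
  have hq0 : 0 ≤ q := by positivity
  -- the complete space of candidate (conjugated) solutions
  set w : ℝ → ℝ := fun u => Real.exp (-(L * u)) * x₀e u with hwdef
  have hwcont : Continuous w := ((Real.continuous_exp.comp
    (continuous_const.mul continuous_id).neg)).mul hx₀econt
  set S : Set C(Icc (0:ℝ) T, ℝ) :=
    {u | ∀ p : Icc (0:ℝ) T, (p:ℝ) ≤ τ → u p = w p} with hSdef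
  have hSclosed : IsClosed S := by
    have hrw : S = ⋂ p : Icc (0:ℝ) T, {u : C(Icc (0:ℝ) T, ℝ) | (p:ℝ) ≤ τ → u p = w p} := by
      ext u; simp only [hSdef, mem_setOf_eq, mem_iInter]
    rw [hrw]
    apply isClosed_iInter
    intro p
    by_cases hp : (p:ℝ) ≤ τ
    · have hq : {u : C(Icc (0:ℝ) T, ℝ) | (p:ℝ) ≤ τ → u p = w p}
          = {u : C(Icc (0:ℝ) T, ℝ) | u p = w ↑p} := by ext u; simp [hp]
      rw [hq]
      exact isClosed_eq (continuous_eval_const p) continuous_const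
    · have hq : {u : C(Icc (0:ℝ) T, ℝ) | (p:ℝ) ≤ τ → u p = w p} = univ := by ext u; simp [hp]
      rw [hq]
      exact isClosed_univ
  have hSnonempty : S.Nonempty :=
    ⟨⟨fun p => w p, hwcont.comp continuous_subtype_val⟩, fun p _ => rfl⟩
  -- the unconjugated extension of an element of the space
  set ext : C(Icc (0:ℝ) T, ℝ) → ℝ → ℝ :=
    fun u t => Real.exp (L * t) * u ⟨π t, hπmem t⟩ with hextdef
  have hextcont : ∀ u, Continuous (ext u) := by
    intro u
    exact (Real.continuous_exp.comp (continuous_const.mul continuous_id)).mul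
      (u.continuous.comp (hπcont.subtype_mk hπmem))
  have hextS : ∀ u ∈ S, ∀ t ∈ Icc (0:ℝ) τ, ext u t = x₀e t := by
    intro u hu t ht
    have htT : t ∈ Icc (0:ℝ) T := ⟨ht.1, ht.2.trans hτT⟩
    have hπt : π t = t := hπid t htT
    have hp : ((⟨π t, hπmem t⟩ : Icc (0:ℝ) T) : ℝ) ≤ τ := by
      show π t ≤ τ; rw [hπt]; exact ht.2
    have h1 : ext u t = Real.exp (L * t) * u ⟨π t, hπmem t⟩ := by rw [hextdef]
    rw [h1, hu _ hp]
    show Real.exp (L * t) * (Real.exp (-(L * π t)) * x₀e (π t)) = x₀e t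
    rw [hπt, ← mul_assoc, ← Real.exp_add, add_neg_cancel, Real.exp_zero, one_mul]
  -- the fixed point operator
  have hglue : ∀ u ∈ S, ∀ a : ℝ, a = τ → x₀e a = Ξ (ext u) a := by
    intro u hu a ha
    subst ha
    rw [hmatch]
    exact hΞcongr x₀e (ext u) a ⟨hτ0.le, hτT⟩
      (fun s hs => (hextS u hu s hs).symm)
  set Φraw : C(Icc (0:ℝ) T, ℝ) → ℝ → ℝ :=
    fun u t => if t ≤ τ then x₀e t else Ξ (ext u) t with hΦrawdef
  have hΦrawcont : ∀ u ∈ S, Continuous (Φraw u) := by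
    intro u hu
    exact Continuous.if_le hx₀econt (hΞcont (ext u) (hextcont u)) continuous_id
      continuous_const (hglue u hu)
  set Ψ : ↥S → ↥S := fun u => ⟨⟨fun p => Real.exp (-(L * p)) * Φraw u.1 p,
      ((Real.continuous_exp.comp ((continuous_const.mul continuous_id).neg)).comp
        continuous_subtype_val).mul ((hΦrawcont u.1 u.2).comp continuous_subtype_val)⟩,
      by
        intro p hp
        simp only [ContinuousMap.coe_mk, hwdef]
        rw [hΦrawdef]; simp only [if_pos hp]⟩ with hΨdef
  haveI : Nonempty ↥S := hSnonempty.to_subtype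
  haveI : CompleteSpace ↥S := hSclosed.completeSpace_coe
  -- contraction estimate
  have hexpint : ∀ r : ℝ, (∫ s in (0:ℝ)..r, Real.exp (L * s)) = (Real.exp (L * r) - 1)/L := by
    intro r
    have hder : ∀ s ∈ uIcc (0:ℝ) r,
        HasDerivAt (fun z => Real.exp (L * z) / L) (Real.exp (L * s)) s := by
      intro s _
      have h1 : HasDerivAt (fun z : ℝ => L * z) L s := by
        simpa using (hasDerivAt_id s).const_mul L
      have h2 := (Real.hasDerivAt_exp (L * s)).comp s h1
      have h3 := h2.div_const L
      have h4 : Real.exp (L * s) * L / L = Real.exp (L * s) := by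
        field_simp
      rw [h4] at h3
      exact h3
    rw [integral_eq_sub_of_hasDerivAt hder
      ((Real.continuous_exp.comp (continuous_const.mul continuous_id)).intervalIntegrable _ _)]
    rw [mul_zero, Real.exp_zero]
    ring
  have hcontr : ∀ u v : ↥S, dist (Ψ u) (Ψ v) ≤ q * dist u v := by
    intro u v
    set d := dist u v with hddef
    have hd0 : (0:ℝ) ≤ d := dist_nonneg
    rw [Subtype.dist_eq, ContinuousMap.dist_le (mul_nonneg hq0 hd0)]
    intro p
    set U : ℝ → ℝ := ext u.1 with hUdef
    set V : ℝ → ℝ := ext v.1 with hVdef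
    have hUc : Continuous U := hextcont _
    have hVc : Continuous V := hextcont _
    have hdapply : ∀ r : Icc (0:ℝ) T, |u.1 r - v.1 r| ≤ d := by
      intro r
      have h5 := ContinuousMap.dist_apply_le_dist (f := u.1) (g := v.1) r
      rw [Real.dist_eq] at h5
      rw [hddef, Subtype.dist_eq]
      exact h5
    have hptw : ∀ r ∈ Icc (0:ℝ) T, |U r - V r| ≤ Real.exp (L * r) * d := by
      intro r hr
      have heq : U r - V r
          = Real.exp (L * r) * (u.1 ⟨π r, hπmem r⟩ - v.1 ⟨π r, hπmem r⟩) := by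
        show Real.exp (L * r) * u.1 ⟨π r, hπmem r⟩
            - Real.exp (L * r) * v.1 ⟨π r, hπmem r⟩ = _
        ring
      rw [heq, abs_mul, abs_of_pos (Real.exp_pos _)]
      exact mul_le_mul_of_nonneg_left (hdapply _) (Real.exp_pos _).le
    show dist (Real.exp (-(L * ↑p)) * Φraw u.1 ↑p) (Real.exp (-(L * ↑p)) * Φraw v.1 ↑p) ≤ q * d
    by_cases hp : (p:ℝ) ≤ τ
    · have heq : Φraw u.1 ↑p = Φraw v.1 ↑p := by
        show (if (p:ℝ) ≤ τ then x₀e ↑p else Ξ U ↑p)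
            = (if (p:ℝ) ≤ τ then x₀e ↑p else Ξ V ↑p)
        rw [if_pos hp, if_pos hp]
      rw [Real.dist_eq, heq, sub_self, abs_zero]
      exact mul_nonneg hq0 hd0
    · push_neg at hp
      have hpT : (p:ℝ) ∈ Icc (0:ℝ) T := p.2
      have hpτT : (p:ℝ) ∈ Icc τ T := ⟨hp.le, hpT.2⟩
      have hΦu : Φraw u.1 ↑p = Ξ U ↑p := by
        show (if (p:ℝ) ≤ τ then x₀e ↑p else Ξ U ↑p) = Ξ U ↑p
        rw [if_neg (not_le.mpr hp)]
      have hΦv : Φraw v.1 ↑p = Ξ V ↑p := by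
        show (if (p:ℝ) ≤ τ then x₀e ↑p else Ξ V ↑p) = Ξ V ↑p
        rw [if_neg (not_le.mpr hp)]
      rw [Real.dist_eq, hΦu, hΦv, ← mul_sub, abs_mul, abs_of_pos (Real.exp_pos _)]
      set S1 : ℝ := ∑ i ∈ Finset.Icc 1 (n-1), c i ↑p * (U (b i ↑p) - V (b i ↑p)) with hS1def
      set S2 : ℝ := ∑ i ∈ Finset.Icc 1 n,
        ∫ s in b (i-1) ↑p..b i ↑p, Kc' i ↑p s * (U s - V s) with hS2def
      have hdiff : Ξ U ↑p - Ξ V ↑p = (Kc n ↑p ↑p)⁻¹ * (-S1 - S2) := by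
        simp only [hΞdef, hS1def, hS2def]
        have e1 : ∑ i ∈ Finset.Icc 1 (n-1), c i ↑p * (U (b i ↑p) - V (b i ↑p))
            = (∑ i ∈ Finset.Icc 1 (n-1), c i ↑p * U (b i ↑p))
              - ∑ i ∈ Finset.Icc 1 (n-1), c i ↑p * V (b i ↑p) := by
          rw [← Finset.sum_sub_distrib]
          apply Finset.sum_congr rfl
          intros; ring
        have e2 : ∑ i ∈ Finset.Icc 1 n,
              (∫ s in b (i-1) ↑p..b i ↑p, Kc' i ↑p s * (U s - V s))
            = (∑ i ∈ Finset.Icc 1 n, ∫ s in b (i-1) ↑p..b i ↑p, Kc' i ↑p s * U s)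
              - ∑ i ∈ Finset.Icc 1 n, ∫ s in b (i-1) ↑p..b i ↑p, Kc' i ↑p s * V s := by
          rw [← Finset.sum_sub_distrib]
          apply Finset.sum_congr rfl
          intro i hi
          obtain ⟨h1i, hin⟩ := Finset.mem_Icc.mp hi
          rw [← integral_sub (hKc'int i h1i hin U hUc _ _ _) (hKc'int i h1i hin V hVc _ _ _)]
          apply intervalIntegral.integral_congr
          intro s _
          show Kc' i ↑p s * (U s - V s) = Kc' i ↑p s * U s - Kc' i ↑p s * V s
          ring
        rw [e1, e2]
        ring
      have hS1b : |S1| ≤ (n:ℝ) * (Cb * (Real.exp (L * ((p:ℝ) - h)) * d)) := by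
        have hterm : ∀ i ∈ Finset.Icc 1 (n-1), |c i ↑p * (U (b i ↑p) - V (b i ↑p))|
            ≤ Cb * (Real.exp (L * ((p:ℝ) - h)) * d) := by
          intro i hi
          obtain ⟨h1i, him⟩ := Finset.mem_Icc.mp hi
          have hin : i ≤ n := le_trans him (Nat.sub_le n 1)
          have hbm : b i ↑p ∈ Icc (0:ℝ) ↑p := by
            rw [hbid i ↑p hpT]; exact hαmem i hin ↑p hpT
          have hbT : b i ↑p ∈ Icc (0:ℝ) T := ⟨hbm.1, hbm.2.trans hpT.2⟩
          have hble : b i ↑p ≤ (p:ℝ) - h := by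
            have h1 : α i ↑p ≤ α (n-1) ↑p := hmono ↑p hpT i (n-1) him (Nat.sub_le n 1)
            have h2 : h ≤ (p:ℝ) - α (n-1) ↑p := hmin.2 (mem_image_of_mem _ hpτT)
            rw [hbid i ↑p hpT]; linarith
          have h3 : |U (b i ↑p) - V (b i ↑p)| ≤ Real.exp (L * b i ↑p) * d := hptw _ hbT
          have h4 : Real.exp (L * b i ↑p) ≤ Real.exp (L * ((p:ℝ) - h)) :=
            Real.exp_le_exp.2 (mul_le_mul_of_nonneg_left hble hL0.le)
          calc |c i ↑p * (U (b i ↑p) - V (b i ↑p))|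
              = |c i ↑p| * |U (b i ↑p) - V (b i ↑p)| := abs_mul _ _
            _ ≤ Cb * (Real.exp (L * ((p:ℝ) - h)) * d) := by
                apply mul_le_mul (hCbb i hi ↑p) _ (abs_nonneg _) hCb0
                exact h3.trans (mul_le_mul_of_nonneg_right h4 hd0)
        calc |S1| ≤ ∑ i ∈ Finset.Icc 1 (n-1), |c i ↑p * (U (b i ↑p) - V (b i ↑p))| := by
              rw [hS1def]; exact Finset.abs_sum_le_sum_abs _ _
          _ ≤ (Finset.Icc 1 (n-1)).card • (Cb * (Real.exp (L * ((p:ℝ) - h)) * d)) :=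
              Finset.sum_le_card_nsmul _ _ _ hterm
          _ = ((n - 1 : ℕ) : ℝ) * (Cb * (Real.exp (L * ((p:ℝ) - h)) * d)) := by
              rw [Nat.card_Icc, nsmul_eq_mul]
              norm_num
          _ ≤ (n:ℝ) * (Cb * (Real.exp (L * ((p:ℝ) - h)) * d)) := by
              apply mul_le_mul_of_nonneg_right _ (by positivity)
              exact_mod_cast Nat.sub_le n 1
      have hS2b : |S2| ≤ (n:ℝ) * (M * ((Real.exp (L * ↑p) - 1)/L * d)) := by
        have hterm : ∀ i ∈ Finset.Icc 1 n,
            |∫ s in b (i-1) ↑p..b i ↑p, Kc' i ↑p s * (U s - V s)|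
            ≤ M * ((Real.exp (L * ↑p) - 1)/L * d) := by
          intro i hi
          obtain ⟨h1i, hin⟩ := Finset.mem_Icc.mp hi
          have him : i - 1 ≤ n := le_trans (Nat.sub_le i 1) hin
          have hbmlo : b (i-1) ↑p ∈ Icc (0:ℝ) ↑p := by
            rw [hbid (i-1) ↑p hpT]; exact hαmem (i-1) him ↑p hpT
          have hbmhi : b i ↑p ∈ Icc (0:ℝ) ↑p := by
            rw [hbid i ↑p hpT]; exact hαmem i hin ↑p hpT
          have hord : b (i-1) ↑p ≤ b i ↑p := by
            rw [hbid (i-1) ↑p hpT, hbid i ↑p hpT]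
            exact hmono ↑p hpT (i-1) i (Nat.sub_le i 1) hin
          have hint1 : IntervalIntegrable (fun s => |Kc' i ↑p s * (U s - V s)|) volume
              (b (i-1) ↑p) (b i ↑p) :=
            ((((hKc'cont i h1i hin).comp (Continuous.prodMk_right (p:ℝ))).mul
              (hUc.sub hVc)).abs).intervalIntegrable _ _
          have hint2 : IntervalIntegrable (fun s => M * (Real.exp (L * s) * d)) volume
              (b (i-1) ↑p) (b i ↑p) :=
            (continuous_const.mul ((Real.continuous_exp.comp
              (continuous_const.mul continuous_id)).mul continuous_const)).intervalIntegrable _ _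
          calc |∫ s in b (i-1) ↑p..b i ↑p, Kc' i ↑p s * (U s - V s)|
              ≤ ∫ s in b (i-1) ↑p..b i ↑p, |Kc' i ↑p s * (U s - V s)| :=
                intervalIntegral.abs_integral_le_integral_abs hord
            _ ≤ ∫ s in b (i-1) ↑p..b i ↑p, M * (Real.exp (L * s) * d) := by
                apply intervalIntegral.integral_mono_on hord hint1 hint2
                intro s hs
                have hsT : s ∈ Icc (0:ℝ) T :=
                  ⟨hbmlo.1.trans hs.1, hs.2.trans (hbmhi.2.trans hpT.2)⟩
                rw [abs_mul]
                exact mul_le_mul (hMb i hi ↑p s) (hptw s hsT) (abs_nonneg _) hM0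
            _ ≤ ∫ s in (0:ℝ)..(p:ℝ), M * (Real.exp (L * s) * d) := by
                apply intervalIntegral.integral_mono_interval hbmlo.1 hord hbmhi.2
                · exact Eventually.of_forall (fun s => by positivity)
                · exact (continuous_const.mul ((Real.continuous_exp.comp
                    (continuous_const.mul continuous_id)).mul
                      continuous_const)).intervalIntegrable _ _
            _ = M * ((Real.exp (L * ↑p) - 1)/L * d) := by
                have hrw : (fun s => M * (Real.exp (L * s) * d))
                    = fun s => (M * d) * Real.exp (L * s) := funext fun s => by ring
                rw [hrw, intervalIntegral.integral_const_mul, hexpint (p:ℝ)]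
                ring
        calc |S2| ≤ ∑ i ∈ Finset.Icc 1 n,
              |∫ s in b (i-1) ↑p..b i ↑p, Kc' i ↑p s * (U s - V s)| := by
              rw [hS2def]; exact Finset.abs_sum_le_sum_abs _ _
          _ ≤ (Finset.Icc 1 n).card • (M * ((Real.exp (L * ↑p) - 1)/L * d)) :=
              Finset.sum_le_card_nsmul _ _ _ hterm
          _ = (n:ℝ) * (M * ((Real.exp (L * ↑p) - 1)/L * d)) := by
              rw [Nat.card_Icc, nsmul_eq_mul]
              norm_num
      have h1 : |Ξ U ↑p - Ξ V ↑p| ≤ Bb * (|S1| + |S2|) := by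
        rw [hdiff, abs_mul]
        apply mul_le_mul (hBbb ↑p) _ (abs_nonneg _) hBb0
        calc |(-S1 - S2)| = |(-S1) + (-S2)| := by ring_nf
          _ ≤ |(-S1)| + |(-S2)| := abs_add_le _ _
          _ = |S1| + |S2| := by rw [abs_neg, abs_neg]
      have hE : Real.exp (-(L * ↑p)) * Real.exp (L * ((p:ℝ) - h)) = Real.exp (-(L * h)) := by
        rw [← Real.exp_add]
        congr 1
        ring
      have hE2 : Real.exp (-(L * ↑p)) * ((Real.exp (L * ↑p) - 1)/L) ≤ 1/L := by
        have e3 : Real.exp (-(L * ↑p)) * (Real.exp (L * ↑p) - 1)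
            = 1 - Real.exp (-(L * ↑p)) := by
          rw [mul_sub, ← Real.exp_add, neg_add_cancel, Real.exp_zero, mul_one]
        rw [← mul_div_assoc, e3]
        gcongr
        linarith [Real.exp_pos (-(L * (p:ℝ)))]
      calc Real.exp (-(L * ↑p)) * |Ξ U ↑p - Ξ V ↑p|
          ≤ Real.exp (-(L * ↑p)) * (Bb * (|S1| + |S2|)) :=
            mul_le_mul_of_nonneg_left h1 (Real.exp_pos _).le
        _ ≤ Real.exp (-(L * ↑p)) * (Bb * (((n:ℝ) * (Cb * (Real.exp (L * ((p:ℝ) - h)) * d)))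
              + (n:ℝ) * (M * ((Real.exp (L * ↑p) - 1)/L * d)))) := by
            apply mul_le_mul_of_nonneg_left _ (Real.exp_pos _).le
            exact mul_le_mul_of_nonneg_left (add_le_add hS1b hS2b) hBb0
        _ = Bb * ((n:ℝ) * Cb * d * (Real.exp (-(L * ↑p)) * Real.exp (L * ((p:ℝ) - h)))
              + (n:ℝ) * M * d * (Real.exp (-(L * ↑p)) * ((Real.exp (L * ↑p) - 1)/L))) := by
            ring
        _ ≤ Bb * ((n:ℝ) * Cb * d * Real.exp (-(L * h)) + (n:ℝ) * M * d * (1/L)) := by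
            rw [hE]
            apply mul_le_mul_of_nonneg_left _ hBb0
            exact add_le_add le_rfl (mul_le_mul_of_nonneg_left hE2 (by positivity))
        _ = q * d := by rw [hqdef]; ring
  set qnn : NNReal := ⟨q, hq0⟩ with hqnndef
  have hCW : ContractingWith qnn Ψ := by
    constructor
    · exact_mod_cast hq1
    · exact LipschitzWith.of_dist_le_mul hcontr
  set ustar := hCW.fixedPoint Ψ with hustar
  have hfix : Ψ ustar = ustar := hCW.fixedPoint_isFixedPt
  set X : ℝ → ℝ := ext (ustar : C(Icc (0:ℝ) T, ℝ)) with hXdef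
  have hXcont : Continuous X := hextcont _
  -- properties of the fixed point
  have hXfix : ∀ t ∈ Icc (0:ℝ) T, X t = Φraw (ustar : C(Icc (0:ℝ) T, ℝ)) t := by
    intro t ht
    have h0 := congrArg Subtype.val hfix
    have h1 : ((Ψ ustar : ↥S) : C(Icc (0:ℝ) T, ℝ)) ⟨t, ht⟩
        = (ustar : C(Icc (0:ℝ) T, ℝ)) ⟨t, ht⟩ := by rw [h0]
    have h2 : ((Ψ ustar : ↥S) : C(Icc (0:ℝ) T, ℝ)) ⟨t, ht⟩
        = Real.exp (-(L * t)) * Φraw (ustar : C(Icc (0:ℝ) T, ℝ)) t := rfl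
    have h3 : X t = Real.exp (L * t) * (ustar : C(Icc (0:ℝ) T, ℝ)) ⟨t, ht⟩ := by
      have hsub : (⟨π t, hπmem t⟩ : Icc (0:ℝ) T) = ⟨t, ht⟩ := Subtype.ext (hπid t ht)
      calc X t = Real.exp (L * t) * (ustar : C(Icc (0:ℝ) T, ℝ)) ⟨π t, hπmem t⟩ := by
            rw [hXdef, hextdef]
        _ = Real.exp (L * t) * (ustar : C(Icc (0:ℝ) T, ℝ)) ⟨t, ht⟩ := by rw [hsub]
    rw [h3, ← h1, h2, ← mul_assoc, ← Real.exp_add, add_neg_cancel, Real.exp_zero, one_mul]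
  have hXloc : ∀ t ∈ Icc (0:ℝ) τ, X t = x₀e t :=
    fun t ht => hextS _ ustar.2 t ht
  have hX2nd : ∀ t ∈ Icc τ T, X t = Ξ X t := by
    intro t ht
    have htT : t ∈ Icc (0:ℝ) T := ⟨hτ0.le.trans ht.1, ht.2⟩
    rcases eq_or_lt_of_le ht.1 with heq | hlt
    · rw [← heq]
      rw [hXloc τ ⟨hτ0.le, le_rfl⟩, hmatch]
      exact hΞcongr x₀e X τ ⟨hτ0.le, hτT⟩ (fun s hs => (hXloc s hs).symm)
    · have h1 := hXfix t htT
      rw [h1]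
      show (if t ≤ τ then x₀e t else Ξ (ext (ustar : C(Icc (0:ℝ) T, ℝ))) t) = Ξ X t
      rw [if_neg (not_le.mpr hlt)]
  -- X satisfies the first-kind equation on [0, T]
  have hGXloc : ∀ t ∈ Icc (0:ℝ) τ, G X t = f t := by
    intro t ht
    have ht' : t ∈ Icc (0:ℝ) T := ⟨ht.1, ht.2.trans hτT⟩
    rw [← hGx₀ t ht]
    simp only [hGdef]
    apply Finset.sum_congr rfl
    intro i hi
    obtain ⟨h1i, hin⟩ := Finset.mem_Icc.mp hi
    have him : i - 1 ≤ n := le_trans (Nat.sub_le i 1) hin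
    apply intervalIntegral.integral_congr
    intro s hs
    have hbm : ∀ j : ℕ, j ≤ n → b j t ∈ Icc (0:ℝ) t := by
      intro j hj; rw [hbid j t ht']; exact hαmem j hj t ht'
    have hs' : s ∈ Icc (0:ℝ) t := uIcc_subset_Icc (hbm (i-1) him) (hbm i hin) hs
    show Kc i t s * X s = Kc i t s * x₀e s
    rw [hXloc s ⟨hs'.1, hs'.2.trans ht.2⟩]
  have hGX : ∀ t ∈ Icc (0:ℝ) T, G X t = f t := by
    intro t ht
    rcases le_or_gt t τ with hle | hlt
    · exact hGXloc t ⟨ht.1, hle⟩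
    · have key : ∀ y ∈ Icc τ T, G X y = f y := by
        apply eq_of_has_deriv_right_eq (f' := fun y => f' y)
        · intro y hy
          have hyT : y ∈ Icc (0:ℝ) T := ⟨hτ0.le.trans hy.1, hy.2.le⟩
          have hgval : g X y = f' y :=
            (hequiv X y hyT).mpr (hX2nd y ⟨hy.1, hy.2.le⟩)
          have hD := hGderiv X hXcont y hyT
          rw [← hgval]
          have hmem' : Icc (0:ℝ) T ∈ 𝓝[Ici y] y := by
            apply mem_nhdsWithin.2
            refine ⟨Ioo (y-1) T, isOpen_Ioo, ⟨by linarith [hy.1], hy.2⟩, ?_⟩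
            rintro z ⟨hz1, hz2⟩
            exact ⟨le_trans hyT.1 hz2, hz1.2.le⟩
          exact hD.mono_of_mem_nhdsWithin hmem'
        · intro y hy
          exact (hfderiv y ⟨hτ0.le.trans hy.1, hy.2.le⟩).hasDerivWithinAt
        · exact (hGcont X hXcont).continuousOn
        · intro y hy
          exact (hfderiv y ⟨hτ0.le.trans hy.1, hy.2⟩).continuousAt.continuousWithinAt
        · exact hGXloc τ ⟨hτ0.le, le_rfl⟩
      exact key t ⟨hlt.le, ht.2⟩
  -- transfer between the clamped and original equations
  have hGorig : ∀ (x : ℝ → ℝ) (t : ℝ), t ∈ Icc (0:ℝ) T →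
      (∑ i ∈ Finset.Icc 1 n, ∫ s in α (i-1) t..α i t, K i t s * x s) = G x t := by
    intro x t ht
    simp only [hGdef]
    apply Finset.sum_congr rfl
    intro i hi
    obtain ⟨h1i, hin⟩ := Finset.mem_Icc.mp hi
    have him : i - 1 ≤ n := le_trans (Nat.sub_le i 1) hin
    rw [hbid i t ht, hbid (i-1) t ht]
    apply intervalIntegral.integral_congr
    intro s hs
    have hs' : s ∈ Icc (0:ℝ) t :=
      uIcc_subset_Icc (hαmem (i-1) him t ht) (hαmem i hin t ht) hs
    have hsT : s ∈ Icc (0:ℝ) T := ⟨hs'.1, hs'.2.trans ht.2⟩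
    show K i t s * x s = Kc i t s * x s
    simp only [hKcdef]
    rw [hπid t ht, hπid s hsT]
  refine ⟨X, ⟨hXcont.continuousOn, fun t ht => by rw [hGorig X t ht]; exact hGX t ht⟩, ?_⟩
  -- uniqueness
  rintro y ⟨hyc, hyeq⟩
  set ye : ℝ → ℝ := fun u => y (π u) with hyedef
  have hyecont : Continuous ye := hyc.comp_continuous hπcont hπmem
  have hyeid : ∀ s ∈ Icc (0:ℝ) T, ye s = y s := fun s hs => by
    simp only [hyedef]; rw [hπid s hs]
  have hyx₀ : ∀ t ∈ Icc (0:ℝ) τ, y t = x₀ t := by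
    apply hx₀uniq
    exact ⟨hyc.mono (Icc_subset_Icc le_rfl hτT),
      fun t ht => hyeq t ⟨ht.1, ht.2.trans hτT⟩⟩
  have hGye : ∀ t ∈ Icc (0:ℝ) T, G ye t = f t := by
    intro t ht
    rw [← hGorig ye t ht, ← hyeq t ht]
    apply Finset.sum_congr rfl
    intro i hi
    obtain ⟨h1i, hin⟩ := Finset.mem_Icc.mp hi
    have him : i - 1 ≤ n := le_trans (Nat.sub_le i 1) hin
    apply intervalIntegral.integral_congr
    intro s hs
    have hs' : s ∈ Icc (0:ℝ) t :=
      uIcc_subset_Icc (hαmem (i-1) him t ht) (hαmem i hin t ht) hs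
    have hsT : s ∈ Icc (0:ℝ) T := ⟨hs'.1, hs'.2.trans ht.2⟩
    show K i t s * ye s = K i t s * y s
    rw [hyeid s hsT]
  have hye2nd : ∀ t ∈ Icc (0:ℝ) T, ye t = Ξ ye t := by
    intro t ht
    apply (hequiv ye t ht).mp
    have hD := hGderiv ye hyecont t ht
    have hDf : HasDerivWithinAt f (g ye t) (Icc 0 T) t :=
      hD.congr (fun z hz => (hGye z hz).symm) ((hGye t ht).symm)
    have hud : UniqueDiffWithinAt ℝ (Icc (0:ℝ) T) t := (uniqueDiffOn_Icc hT) t ht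
    rw [← hDf.derivWithin hud, ← ((hfderiv t ht).hasDerivWithinAt).derivWithin hud]
  set v : C(Icc (0:ℝ) T, ℝ) := ⟨fun p => Real.exp (-(L * p)) * ye p,
    ((Real.continuous_exp.comp ((continuous_const.mul continuous_id).neg)).comp
      continuous_subtype_val).mul (hyecont.comp continuous_subtype_val)⟩ with hvdef
  have hvS : v ∈ S := by
    intro p hp
    show Real.exp (-(L * p)) * ye p = w p
    rw [hwdef]
    show Real.exp (-(L * ↑p)) * ye ↑p = Real.exp (-(L * ↑p)) * x₀e ↑p
    rw [hyeid ↑p p.2, hyx₀ ↑p ⟨p.2.1, hp⟩, hx₀eid ↑p ⟨p.2.1, hp⟩]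
  have hvfix : Function.IsFixedPt Ψ ⟨v, hvS⟩ := by
    apply Subtype.ext
    apply ContinuousMap.ext
    intro p
    show Real.exp (-(L * p)) * Φraw v p = v p
    have hΦv : Φraw v ↑p = ye ↑p := by
      by_cases hp : (p:ℝ) ≤ τ
      · show (if (p:ℝ) ≤ τ then x₀e ↑p else Ξ (ext v) ↑p) = ye ↑p
        rw [if_pos hp, hx₀eid ↑p ⟨p.2.1, hp⟩, hyeid ↑p p.2, hyx₀ ↑p ⟨p.2.1, hp⟩]
      · show (if (p:ℝ) ≤ τ then x₀e ↑p else Ξ (ext v) ↑p) = ye ↑p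
        rw [if_neg hp]
        have hextv : ∀ s ∈ Icc (0:ℝ) (p:ℝ), ext v s = ye s := by
          intro s hs
          have hsT : s ∈ Icc (0:ℝ) T := ⟨hs.1, hs.2.trans p.2.2⟩
          show Real.exp (L * s) * v ⟨π s, hπmem s⟩ = ye s
          have hπs : π s = s := hπid s hsT
          show Real.exp (L * s) * (Real.exp (-(L * π s)) * ye (π s)) = ye s
          rw [hπs, ← mul_assoc, ← Real.exp_add, add_neg_cancel, Real.exp_zero, one_mul]
        rw [hΞcongr (ext v) ye ↑p p.2 hextv, ← hye2nd ↑p p.2]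
    rw [hΦv]
    rfl
  have hveq : (⟨v, hvS⟩ : ↥S) = ustar := hCW.fixedPoint_unique hvfix
  intro t ht
  have h1 : v ⟨t, ht⟩ = (ustar : C(Icc (0:ℝ) T, ℝ)) ⟨t, ht⟩ := by rw [← hveq]
  have h2 : X t = Real.exp (L * t) * (ustar : C(Icc (0:ℝ) T, ℝ)) ⟨t, ht⟩ := by
    have hsub : (⟨π t, hπmem t⟩ : Icc (0:ℝ) T) = ⟨t, ht⟩ := Subtype.ext (hπid t ht)
    calc X t = Real.exp (L * t) * (ustar : C(Icc (0:ℝ) T, ℝ)) ⟨π t, hπmem t⟩ := by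
          rw [hXdef, hextdef]
      _ = Real.exp (L * t) * (ustar : C(Icc (0:ℝ) T, ℝ)) ⟨t, ht⟩ := by rw [hsub]
  have h3 : v ⟨t, ht⟩ = Real.exp (-(L * t)) * ye t := rfl
  rw [h2, ← h1, h3, ← mul_assoc, ← Real.exp_add, add_neg_cancel, Real.exp_zero, one_mul]
  exact (hyeid t ht).symm
end

section
/- (One-parameter family of solutions for a jump kernel; ill-posedness example.) For every real constant c, the function x(s) = c − (ln s)/(ln 2), defined for s > 0, satisfies ∫_0^{t/2} x(s) ds − ∫_{t/2}^{t} x(s) ds = t for every t > 0 (the first integral being a convergent improper integral, since s ↦ ln s is integrable on (0, t/2)). -/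
open intervalIntegral Set

lemma integrableOn_log_Ioc {a : ℝ} (ha : 0 < a) (ha1 : a ≤ 1) :
    MeasureTheory.IntegrableOn Real.log (Set.Ioc 0 a) := by
  have h : MeasureTheory.IntegrableOn (fun x => -Real.log x) (Set.Ioc 0 a) := by
    apply intervalIntegral.integrableOn_deriv_of_nonneg
      (g := fun x => x - x * Real.log x)
    · exact (continuous_id.sub Real.continuous_mul_log).continuousOn
    · intro x hx
      have := (hasDerivAt_id x).sub (Real.hasDerivAt_mul_log hx.1.ne')
      refine this.congr_deriv ?_
      ring
    · intro x hx
      simp only [neg_nonneg]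
      exact Real.log_nonpos hx.1.le (hx.2.le.trans ha1)
  have h2 : MeasureTheory.IntegrableOn (fun x => -(-Real.log x)) (Set.Ioc 0 a) := h.neg
  simpa using h2

lemma intervalIntegrable_log_zero {a : ℝ} (ha : 0 < a) :
    IntervalIntegrable Real.log MeasureTheory.volume 0 a := by
  rw [intervalIntegrable_iff_integrableOn_Ioc_of_le ha.le]
  rcases le_or_gt a 1 with h | h
  · exact integrableOn_log_Ioc ha h
  · have h1 : MeasureTheory.IntegrableOn Real.log (Set.Ioc 0 1) :=
      integrableOn_log_Ioc one_pos le_rfl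
    have h2 : MeasureTheory.IntegrableOn Real.log (Set.Ioc 1 a) := by
      have hc : ContinuousOn Real.log (Set.Icc 1 a) :=
        Real.continuousOn_log.mono (fun x hx => ne_of_gt (lt_of_lt_of_le one_pos hx.1))
      exact (hc.integrableOn_compact isCompact_Icc).mono_set Set.Ioc_subset_Icc_self
    have := h1.union h2
    rwa [Set.Ioc_union_Ioc_eq_Ioc zero_le_one h.le] at this

lemma integral_log_from_zero' {a : ℝ} (ha : 0 < a) :
    ∫ x in (0:ℝ)..a, Real.log x = a * Real.log a - a := by
  have key := intervalIntegral.integral_eq_sub_of_hasDeriv_right_of_le ha.le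
    (f := fun x => x * Real.log x - x) (f' := Real.log)
    ((Real.continuous_mul_log.sub continuous_id).continuousOn)
    (fun x hx => by
      have := ((Real.hasDerivAt_mul_log hx.1.ne').sub (hasDerivAt_id x))
      have h2 : Real.log x + 1 - 1 = Real.log x := by ring
      rw [h2] at this
      exact this.hasDerivWithinAt)
    (intervalIntegrable_log_zero ha)
  simpa using key

/-- **Ill-posedness example (one-parameter family of solutions).** For every real
constant `c`, the function `x(s) = c − ln s / ln 2` satisfies
`∫_0^{t/2} x(s) ds − ∫_{t/2}^{t} x(s) ds = t` for every `t > 0`. -/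
theorem ill_posed_example_family_of_solutions (c : ℝ) :
    ∀ t : ℝ, 0 < t →
      (∫ s in (0:ℝ)..(t / 2), (c - Real.log s / Real.log 2)) -
        (∫ s in (t / 2)..t, (c - Real.log s / Real.log 2)) = t := by
  intro t ht
  have ht2 : 0 < t / 2 := by linarith
  have hlog2 : Real.log 2 ≠ 0 := ne_of_gt (Real.log_pos one_lt_two)
  have hi1 : IntervalIntegrable (fun s => Real.log s / Real.log 2)
      MeasureTheory.volume 0 (t / 2) := (intervalIntegrable_log_zero ht2).div_const _
  have hi2 : IntervalIntegrable Real.log MeasureTheory.volume (t / 2) t :=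
    intervalIntegrable_log (by
      intro h
      rcases h with h
      simp only [Set.mem_uIcc] at h
      rcases h with ⟨h1, _⟩ | ⟨_, h2⟩ <;> linarith)
  have e1 : (∫ s in (0:ℝ)..(t / 2), (c - Real.log s / Real.log 2))
      = c * (t / 2) - ((t / 2) * Real.log (t / 2) - t / 2) / Real.log 2 := by
    rw [intervalIntegral.integral_sub (intervalIntegrable_const) hi1,
      intervalIntegral.integral_const,
      intervalIntegral.integral_div, integral_log_from_zero' ht2]
    simp [mul_comm]
  have e2 : (∫ s in (t / 2)..t, (c - Real.log s / Real.log 2))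
      = c * (t / 2) - (t * Real.log t - (t / 2) * Real.log (t / 2) - t + t / 2) / Real.log 2 := by
    rw [intervalIntegral.integral_sub (intervalIntegrable_const) (hi2.div_const _),
      intervalIntegral.integral_const,
      intervalIntegral.integral_div, integral_log]
    have : t - t / 2 = t / 2 := by ring
    rw [this, smul_eq_mul, mul_comm]
  rw [e1, e2]
  have hlogdiv : Real.log (t / 2) = Real.log t - Real.log 2 :=
    Real.log_div ht.ne' two_ne_zero
  rw [hlogdiv]
  field_simp
  ring
end

section
/- (Value of the solution at the origin, formula (6).) Let n ≥ 1 and T > 0. Let α_0, …, α_n : [0,T] → ℝ be continuously differentiable with α_0(t) = 0, α_n(t) = t, α_i(0) = 0 for all i, and 0 = α_0(t) < α_1(t) < ⋯ < α_{n-1}(t) < α_n(t) = t for t ∈ (0,T]. Let K_1, …, K_n : [0,T] × [0,T] → ℝ be continuous with continuous partial derivatives ∂K_i/∂t, let f : [0,T] → ℝ be continuously differentiable with f(0) = 0, and suppose Σ_{i=1}^{n} K_i(0,0) (α_i'(0) − α_{i-1}'(0)) ≠ 0. If x : [0,T] → ℝ is a continuous function satisfying Σ_{i=1}^{n} ∫_{α_{i-1}(t)}^{α_i(t)}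 K_i(t,s) x(s) ds = f(t) for all t ∈ [0,T], then x(0) = f'(0) / ( Σ_{i=1}^{n} K_i(0,0) (α_i'(0) − α_{i-1}'(0)) ). -/
open intervalIntegral Set Filter Topology

/-- **Value of the solution at the origin (formula (6)).** If `x` is a continuous
solution on `[0,T]` of the weakly regular Volterra equation
`∑_{i=1}^{n} ∫_{α_{i-1}(t)}^{α_i(t)} K_i(t,s) x(s) ds = f(t)` and
`∑_{i=1}^{n} K_i(0,0)(α_i'(0) − α_{i-1}'(0)) ≠ 0`, then
`x(0) = f'(0) / ∑_{i=1}^{n} K_i(0,0)(α_i'(0) − α_{i-1}'(0))`. -/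
theorem solution_value_at_origin
    (n : ℕ) (hn : 1 ≤ n) (T : ℝ) (hT : 0 < T)
    (α α' : ℕ → ℝ → ℝ) (K K' : ℕ → ℝ → ℝ → ℝ) (f f' : ℝ → ℝ)
    (hα0 : ∀ t, α 0 t = 0)
    (hαn : ∀ t, α n t = t)
    (hαderiv : ∀ i, i ≤ n → ∀ t ∈ Icc (0:ℝ) T, HasDerivAt (α i) (α' i t) t)
    (hα'cont : ∀ i, i ≤ n → ContinuousOn (α' i) (Icc 0 T))
    (hαinit : ∀ i, i ≤ n → α i 0 = 0)
    (hαchain : ∀ t ∈ Ioc (0:ℝ) T, ∀ i, 1 ≤ i → i ≤ n → α (i - 1) t < α i t)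
    (hKcont : ∀ i, 1 ≤ i → i ≤ n →
      ContinuousOn (fun p : ℝ × ℝ => K i p.1 p.2) (Icc 0 T ×ˢ Icc 0 T))
    (hKderiv : ∀ i, 1 ≤ i → i ≤ n → ∀ s ∈ Icc (0:ℝ) T, ∀ t ∈ Icc (0:ℝ) T,
      HasDerivAt (fun u => K i u s) (K' i t s) t)
    (hK'cont : ∀ i, 1 ≤ i → i ≤ n →
      ContinuousOn (fun p : ℝ × ℝ => K' i p.1 p.2) (Icc 0 T ×ˢ Icc 0 T))
    (hfderiv : ∀ t ∈ Icc (0:ℝ) T, HasDerivAt f (f' t) t)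
    (hf'cont : ContinuousOn f' (Icc 0 T))
    (hf0 : f 0 = 0)
    (hdenom : ∑ i ∈ Finset.Icc 1 n, K i 0 0 * (α' i 0 - α' (i - 1) 0) ≠ 0)
    (x : ℝ → ℝ) (hx : ContinuousOn x (Icc 0 T))
    (hsol : ∀ t ∈ Icc (0:ℝ) T,
      ∑ i ∈ Finset.Icc 1 n, ∫ s in α (i - 1) t..α i t, K i t s * x s = f t) :
    x 0 = f' 0 / ∑ i ∈ Finset.Icc 1 n, K i 0 0 * (α' i 0 - α' (i - 1) 0) := by
  have hT0 : (0:ℝ) ∈ Icc (0:ℝ) T := ⟨le_refl 0, hT.le⟩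
  set l : Filter ℝ := 𝓝[Ioc (0:ℝ) T] 0 with hldef
  have hlne : l.NeBot := by
    refine mem_closure_iff_nhdsWithin_neBot.mp ?_
    rw [closure_Ioc hT.ne]
    exact hT0
  -- monotonicity of the chain
  have hmono : ∀ t ∈ Ioc (0:ℝ) T, ∀ j, j ≤ n → ∀ i, i ≤ j → α i t ≤ α j t := by
    intro t ht j
    induction j with
    | zero =>
      intro _ i hi
      obtain rfl : i = 0 := Nat.le_zero.mp hi
      exact le_refl _
    | succ k ih =>
      intro hj i hi
      rcases Nat.lt_or_ge i (k + 1) with h | h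
      · have h1 : α i t ≤ α k t := ih (le_trans (Nat.le_succ k) hj) i (Nat.lt_succ_iff.mp h)
        have h2 : α k t < α (k + 1) t := by
          have := hαchain t ht (k + 1) (Nat.succ_le_succ (Nat.zero_le k)) hj
          simpa using this
        linarith
      · obtain rfl : i = k + 1 := le_antisymm hi h
        exact le_refl _
  have hbound : ∀ t ∈ Ioc (0:ℝ) T, ∀ i, i ≤ n → 0 ≤ α i t ∧ α i t ≤ t := by
    intro t ht i hi
    constructor
    · have := hmono t ht i hi 0 (Nat.zero_le i)
      rwa [hα0] at this
    · have := hmono t ht n le_rfl i hi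
      rwa [hαn] at this
  -- slope limits
  have hlle : l ≤ 𝓝[≠] (0:ℝ) := by
    apply nhdsWithin_mono
    intro t ht
    simp only [mem_compl_iff, mem_singleton_iff]
    exact ne_of_gt ht.1
  have hslope : ∀ i, i ≤ n → Tendsto (fun t => α i t / t) l (𝓝 (α' i 0)) := by
    intro i hi
    have hd : HasDerivAt (α i) (α' i 0) 0 := hαderiv i hi 0 hT0
    have h1 := (hasDerivAt_iff_tendsto_slope.mp hd).mono_left hlle
    refine Tendsto.congr' ?_ h1
    filter_upwards [self_mem_nhdsWithin] with t ht
    rw [slope_def_field, hαinit i hi]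
    ring
  have hfslope : Tendsto (fun t => f t / t) l (𝓝 (f' 0)) := by
    have hd : HasDerivAt f (f' 0) 0 := hfderiv 0 hT0
    have h1 := (hasDerivAt_iff_tendsto_slope.mp hd).mono_left hlle
    refine Tendsto.congr' ?_ h1
    filter_upwards [self_mem_nhdsWithin] with t ht
    rw [slope_def_field, hf0]
    ring
  -- per-term limits
  have hterm : ∀ i ∈ Finset.Icc 1 n, Tendsto
      (fun t => (∫ s in α (i - 1) t..α i t, K i t s * x s) / t) l
      (𝓝 (K i 0 0 * x 0 * (α' i 0 - α' (i - 1) 0))) := by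
    intro i hi
    obtain ⟨h1, h2⟩ := Finset.mem_Icc.mp hi
    have hi1 : i - 1 ≤ n := le_trans (Nat.sub_le i 1) h2
    have hHcont : ContinuousOn (fun p : ℝ × ℝ => K i p.1 p.2 * x p.2)
        (Icc 0 T ×ˢ Icc 0 T) := by
      refine (hKcont i h1 h2).mul ?_
      exact hx.comp continuous_snd.continuousOn (fun p hp => hp.2)
    have hH00 : ContinuousWithinAt (fun p : ℝ × ℝ => K i p.1 p.2 * x p.2)
        (Icc 0 T ×ˢ Icc 0 T) ((0 : ℝ), (0 : ℝ)) := hHcont (0, 0) ⟨hT0, hT0⟩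
    have hba : Tendsto (fun t => (α i t - α (i - 1) t) / t) l
        (𝓝 (α' i 0 - α' (i - 1) 0)) := by
      have := (hslope i h2).sub (hslope (i - 1) hi1)
      refine this.congr ?_
      intro t
      rw [sub_div]
    have hE : Tendsto (fun t => ((∫ s in α (i - 1) t..α i t, K i t s * x s)
        - K i 0 0 * x 0 * (α i t - α (i - 1) t)) / t) l (𝓝 0) := by
      rw [NormedAddCommGroup.tendsto_nhds_zero]
      intro ε hε
      obtain ⟨δ, hδ, hδ'⟩ := Metric.continuousWithinAt_iff.mp hH00 (ε / 2) (half_pos hε)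
      have hev : ∀ᶠ t in l, t ∈ Ioc (0:ℝ) T ∧ |t| < δ := by
        have ha : ∀ᶠ t in l, t ∈ Ioc (0:ℝ) T := self_mem_nhdsWithin
        have hb : ∀ᶠ t in l, |t| < δ := by
          have : ∀ᶠ t in 𝓝 (0:ℝ), |t - 0| < δ := eventually_abs_sub_lt 0 hδ
          simpa using this.filter_mono nhdsWithin_le_nhds
        exact ha.and hb
      filter_upwards [hev] with t htt
      obtain ⟨ht, htδ⟩ := htt
      have htpos : 0 < t := ht.1
      have htT : t ∈ Icc (0:ℝ) T := ⟨ht.1.le, ht.2⟩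
      have ha0 : 0 ≤ α (i - 1) t := (hbound t ht (i - 1) hi1).1
      have hbt : α i t ≤ t := (hbound t ht i h2).2
      have hab : α (i - 1) t ≤ α i t := hmono t ht i h2 (i - 1) (Nat.sub_le i 1)
      have htδ' : t < δ := by rwa [abs_of_pos htpos] at htδ
      -- integrability
      have hct : ContinuousOn (fun s => K i t s * x s) (Icc 0 T) := by
        have hmap : MapsTo (fun s : ℝ => ((t : ℝ), s)) (Icc 0 T) (Icc 0 T ×ˢ Icc 0 T) :=
          fun s hs => ⟨htT, hs⟩
        exact hHcont.comp (Continuous.continuousOn (by continuity)) hmap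
      have hsub : uIcc (α (i - 1) t) (α i t) ⊆ Icc 0 T := by
        rw [uIcc_of_le hab]
        exact Icc_subset_Icc ha0 (le_trans hbt ht.2)
      have hint : IntervalIntegrable (fun s => K i t s * x s) MeasureTheory.volume
          (α (i - 1) t) (α i t) := (hct.mono hsub).intervalIntegrable
      have hrw : (∫ s in α (i - 1) t..α i t, K i t s * x s)
          - K i 0 0 * x 0 * (α i t - α (i - 1) t)
          = ∫ s in α (i - 1) t..α i t, (K i t s * x s - K i 0 0 * x 0) := by
        rw [intervalIntegral.integral_sub hint intervalIntegrable_const,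
          intervalIntegral.integral_const]
        simp [smul_eq_mul]
        ring
      have key : ‖∫ s in α (i - 1) t..α i t, (K i t s * x s - K i 0 0 * x 0)‖
          ≤ (ε / 2) * |α i t - α (i - 1) t| := by
        apply intervalIntegral.norm_integral_le_of_norm_le_const
        intro s hs
        rw [uIoc_of_le hab] at hs
        have hs0 : 0 ≤ s := le_trans ha0 hs.1.le
        have hst : s ≤ t := le_trans hs.2 hbt
        have hsT : s ∈ Icc (0:ℝ) T := ⟨hs0, le_trans hst ht.2⟩
        have hmem : ((t : ℝ), s) ∈ Icc (0:ℝ) T ×ˢ Icc (0:ℝ) T := ⟨htT, hsT⟩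
        have hdist : dist ((t : ℝ), s) ((0 : ℝ), (0 : ℝ)) < δ := by
          rw [Prod.dist_eq]
          simp only [Real.dist_eq, sub_zero]
          rw [abs_of_pos htpos, abs_of_nonneg hs0]
          exact max_lt htδ' (lt_of_le_of_lt hst htδ')
        have := hδ' hmem hdist
        rw [Real.dist_eq] at this
        exact le_of_lt this
      rw [hrw]
      have habs : ‖(∫ s in α (i - 1) t..α i t, (K i t s * x s - K i 0 0 * x 0)) / t‖
          = ‖∫ s in α (i - 1) t..α i t, (K i t s * x s - K i 0 0 * x 0)‖ / t := by
        rw [norm_div, Real.norm_eq_abs t, abs_of_pos htpos]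
      rw [habs]
      have hba' : |α i t - α (i - 1) t| ≤ t := by
        rw [abs_of_nonneg (sub_nonneg.mpr hab)]
        linarith
      have : ‖∫ s in α (i - 1) t..α i t, (K i t s * x s - K i 0 0 * x 0)‖ ≤ (ε / 2) * t := by
        refine le_trans key ?_
        exact mul_le_mul_of_nonneg_left hba' (le_of_lt (half_pos hε))
      rw [div_lt_iff₀ htpos]
      have h3 : ε / 2 * t < ε * t :=
        mul_lt_mul_of_pos_right (by linarith) htpos
      linarith
    have hmain := (((tendsto_const_nhds : Tendsto (fun _ : ℝ => K i 0 0 * x 0) l (𝓝 (K i 0 0 * x 0)))).mul hba).add hE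
    have hlim : K i 0 0 * x 0 * (α' i 0 - α' (i - 1) 0) + 0
        = K i 0 0 * x 0 * (α' i 0 - α' (i - 1) 0) := by ring
    rw [hlim] at hmain
    refine Tendsto.congr' ?_ hmain
    filter_upwards [self_mem_nhdsWithin] with t ht
    have htne : t ≠ 0 := ne_of_gt ht.1
    field_simp
    ring
  have hsum := tendsto_finset_sum (Finset.Icc 1 n) hterm
  have h2 : Tendsto (fun t => f t / t) l
      (𝓝 (∑ i ∈ Finset.Icc 1 n, K i 0 0 * x 0 * (α' i 0 - α' (i - 1) 0))) := by
    refine Tendsto.congr' ?_ hsum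
    filter_upwards [self_mem_nhdsWithin] with t ht
    rw [← Finset.sum_div, hsol t ⟨ht.1.le, ht.2⟩]
  have heq := tendsto_nhds_unique h2 hfslope
  have hkey : x 0 * ∑ i ∈ Finset.Icc 1 n, K i 0 0 * (α' i 0 - α' (i - 1) 0) = f' 0 := by
    rw [Finset.mul_sum, ← heq]
    apply Finset.sum_congr rfl
    intros
    ring
  rw [eq_div_iff hdenom]
  exact hkey
end
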